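/- arXiv:math/0411590 — 7 statements merged into one kernel-verified Lean document; each statement's English description precedes it below -/
import Mathlib

section
/- With the Zhang relaxation map f as above, ‖f(x)‖₁ = ‖x‖₁ if and only if x_i ≤ E_c for all boundary sites i ∈ ∂Λ. Moreover, if there is a boundary site i ∈ ∂Λ with x_i > E_c, then ‖f(x)‖₁ ≤ ‖x‖₁ − ((1−ε)/(2d))·E_c. -/
open Finset

/-- Sites of the lattice cube `[1,L]^d ⊆ ℤ^d`. -/
abbrev Site (d L : ℕ) := Fin d → Fin L

/-- Manhattan metric on the lattice. -/
def dLam {d L : ℕ} (i j : Site d L) : ℕ :=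
  ∑ n : Fin d, ((i n : ℤ) - (j n : ℤ)).natAbs

/-- Heaviside function: `θ a = 1` if `a > 0`, else `0`. -/
noncomputable def theta (a : ℝ) : ℝ := if 0 < a then 1 else 0

/-- The Zhang relaxation map. -/
noncomputable def zhangF (d L : ℕ) (Ec ε : ℝ) (x : Site d L → ℝ) : Site d L → ℝ :=
  fun i => x i - theta (x i - Ec) * (1 - ε) * x i
    + ((1 - ε) / (2 * d)) * ∑ j ∈ univ.filter (fun j => dLam i j = 1), theta (x j - Ec) * x j

/-- 1-norm of a configuration. -/
noncomputable def norm1 {d L : ℕ} (x : Site d L → ℝ) : ℝ := ∑ i, |x i|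

/-- The boundary of the lattice: sites with fewer than `2d` nearest neighbors. -/
def isBoundary {d L : ℕ} (i : Site d L) : Prop :=
  (univ.filter (fun j => dLam i j = 1)).card < 2 * d

lemma dLam_symm {d L : ℕ} (i j : Site d L) : dLam i j = dLam j i := by
  unfold dLam
  apply Finset.sum_congr rfl
  intro n _
  rw [← Int.natAbs_neg]
  ring_nf

lemma sum_eq_one_aux {d : ℕ} {g : Fin d → ℕ} (h : ∑ n, g n = 1) {n : Fin d}
    (hn : g n ≠ 0) : g n = 1 ∧ ∀ m, m ≠ n → g m = 0 := by
  have h1 : g n + ∑ m ∈ univ.erase n, g m = 1 := by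
    rw [Finset.add_sum_erase _ _ (mem_univ n)]; exact h
  have hz : ∑ m ∈ univ.erase n, g m = 0 := by omega
  refine ⟨by omega, fun m hm => ?_⟩
  exact Finset.sum_eq_zero_iff.mp hz m (by simp [hm])

lemma eq_of_dLam_one {d L : ℕ} {i j j' : Site d L} (hj : dLam i j = 1) (hj' : dLam i j' = 1)
    {n : Fin d} (hn : j n ≠ i n) (hn' : j' n ≠ i n)
    (hb : ((i n : ℤ) < (j n : ℤ)) ↔ ((i n : ℤ) < (j' n : ℤ))) : j = j' := by
  have cast_inj : ∀ a b : Fin L, (a : ℤ) = (b : ℤ) → a = b := by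
    intro a b hab
    exact Fin.ext (by exact_mod_cast hab)
  have hgn : ((i n : ℤ) - (j n : ℤ)).natAbs ≠ 0 := by
    simp only [ne_eq, Int.natAbs_eq_zero, sub_eq_zero]
    intro hc; exact hn (cast_inj _ _ hc.symm)
  have hgn' : ((i n : ℤ) - (j' n : ℤ)).natAbs ≠ 0 := by
    simp only [ne_eq, Int.natAbs_eq_zero, sub_eq_zero]
    intro hc; exact hn' (cast_inj _ _ hc.symm)
  obtain ⟨h1, h0⟩ := sum_eq_one_aux hj hgn
  obtain ⟨h1', h0'⟩ := sum_eq_one_aux hj' hgn'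
  funext m
  rcases eq_or_ne m n with rfl | hm
  · apply cast_inj
    have e1 : ((i m : ℤ) - (j m : ℤ)).natAbs = 1 := h1
    have e1' : ((i m : ℤ) - (j' m : ℤ)).natAbs = 1 := h1'
    rw [Int.natAbs_eq_iff] at e1 e1'
    rcases e1 with e1 | e1 <;> rcases e1' with e1' | e1' <;> omega
  · apply cast_inj
    have := h0 m hm
    have := h0' m hm
    simp only [Int.natAbs_eq_zero, sub_eq_zero] at *
    omega

lemma exists_ne_of_dLam_one {d L : ℕ} {i j : Site d L} (hj : dLam i j = 1) :
    ∃ n, j n ≠ i n := by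
  by_contra hc
  push_neg at hc
  have : dLam i j = 0 := by
    unfold dLam
    apply Finset.sum_eq_zero
    intro n _
    simp [hc n]
  omega

lemma neighbors_card_le {d L : ℕ} (hd : 0 < d) (i : Site d L) :
    (univ.filter (fun j => dLam i j = 1)).card ≤ 2 * d := by
  classical
  have : (2 : ℕ) * d = Fintype.card (Fin d × Bool) := by simp [mul_comm]
  rw [this]
  rw [← Finset.card_univ]
  apply Finset.card_le_card_of_injOn
    (fun j => if h : ∃ n, j n ≠ i n then (h.choose, decide ((i h.choose : ℤ) < (j h.choose : ℤ)))
      else (⟨0, hd⟩, false))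
  · intro _ _; exact mem_univ _
  · intro j hj j' hj' heq
    simp only [mem_coe, mem_filter, mem_univ, true_and] at hj hj'
    have hej : ∃ n, j n ≠ i n := exists_ne_of_dLam_one hj
    have hej' : ∃ n, j' n ≠ i n := exists_ne_of_dLam_one hj'
    simp only [dif_pos hej, dif_pos hej', Prod.mk.injEq] at heq
    obtain ⟨h1, h2⟩ := heq
    have hb : ((i hej.choose : ℤ) < (j hej.choose : ℤ)) ↔ ((i hej.choose : ℤ) < (j' hej.choose : ℤ)) := by
      rw [h1] at h2 ⊢
      constructor <;> intro h
      · exact of_decide_eq_true (h2 ▸ decide_eq_true h)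
      · exact of_decide_eq_true (h2.symm ▸ decide_eq_true h)
    exact eq_of_dLam_one hj hj' hej.choose_spec (h1 ▸ hej'.choose_spec) hb

theorem zhang_relaxation_norm_eq_iff
    (d L : ℕ) (hd : 0 < d) (hL : 0 < L)
    (Ec ε : ℝ) (hEc : 0 < Ec) (hε0 : 0 ≤ ε) (hε1 : ε < 1)
    (x : Site d L → ℝ) (hx : ∀ i, 0 ≤ x i) :
    (norm1 (zhangF d L Ec ε x) = norm1 x ↔ ∀ i, isBoundary i → x i ≤ Ec) ∧
      ((∃ i, isBoundary i ∧ Ec < x i) →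
        norm1 (zhangF d L Ec ε x) ≤ norm1 x - (1 - ε) / (2 * d) * Ec) := by
  classical
  set N : Site d L → Finset (Site d L) := fun i => univ.filter (fun j => dLam i j = 1) with hN
  set g : Site d L → ℝ := fun j => theta (x j - Ec) * x j with hgdef
  set k : ℝ := (1 - ε) / (2 * d) with hkdef
  have hd2 : (0 : ℝ) < 2 * d := by positivity
  have hk : 0 < k := div_pos (by linarith) hd2
  have hg0 : ∀ j, 0 ≤ g j := by
    intro j
    simp only [hgdef, theta]
    split <;> simp [hx j]
  have hgle : ∀ j, g j ≤ x j := by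
    intro j
    simp only [hgdef, theta]
    split <;> simp [hx j]
  have hgiff : ∀ j, g j = 0 ↔ x j ≤ Ec := by
    intro j
    simp only [hgdef, theta]
    split
    · rename_i h
      constructor
      · intro h1
        simp at h1
        linarith [hx j, h1]
      · intro h1; linarith
    · rename_i h
      push_neg at h
      simp only [zero_mul]
      constructor
      · intro _; linarith
      · intro _; trivial
  have hfi : ∀ i, zhangF d L Ec ε x i = x i - (1 - ε) * g i + k * ∑ j ∈ N i, g j := by
    intro i
    unfold zhangF
    unfold g k N
    ring
  have hf0 : ∀ i, 0 ≤ zhangF d L Ec ε x i := by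
    intro i
    rw [hfi i]
    have h1 : (1 - ε) * g i ≤ x i := by
      calc (1 - ε) * g i ≤ 1 * g i := by
            apply mul_le_mul_of_nonneg_right _ (hg0 i); linarith
        _ ≤ x i := by rw [one_mul]; exact hgle i
    have h2 : 0 ≤ k * ∑ j ∈ N i, g j :=
      mul_nonneg hk.le (Finset.sum_nonneg fun j _ => hg0 j)
    linarith
  have hswap : ∑ i, ∑ j ∈ N i, g j = ∑ j, ((N j).card : ℝ) * g j := by
    rw [Finset.sum_comm' (s := univ) (t := N) (t' := univ) (s' := N)
      (by
        intro a b
        simp only [mem_univ, true_and, and_true]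
        unfold N
        simp only [mem_filter, mem_univ, true_and]
        rw [dLam_symm])]
    apply Finset.sum_congr rfl
    intro j _
    rw [Finset.sum_const, nsmul_eq_mul]
  have hcard : ∀ j, ((N j).card : ℝ) ≤ 2 * d := by
    intro j
    have := neighbors_card_le (L := L) hd j
    calc ((N j).card : ℝ) ≤ ((2 * d : ℕ) : ℝ) := by exact_mod_cast this
      _ = 2 * d := by push_cast; ring
  have hterm0 : ∀ j, 0 ≤ k * ((2 * (d : ℝ)) - (N j).card) * g j := by
    intro j
    apply mul_nonneg (mul_nonneg hk.le _) (hg0 j)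
    linarith [hcard j]
  have hk2d : k * (2 * (d : ℝ)) = 1 - ε := div_mul_cancel₀ _ (ne_of_gt hd2)
  have key : norm1 (zhangF d L Ec ε x) =
      norm1 x - ∑ j, k * ((2 * (d : ℝ)) - (N j).card) * g j := by
    unfold norm1
    have h1 : ∑ i, |zhangF d L Ec ε x i| = ∑ i, zhangF d L Ec ε x i :=
      Finset.sum_congr rfl fun i _ => abs_of_nonneg (hf0 i)
    have h2 : ∑ i, |x i| = ∑ i, x i :=
      Finset.sum_congr rfl fun i _ => abs_of_nonneg (hx i)
    rw [h1, h2]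
    have h3 : ∑ i, zhangF d L Ec ε x i =
        ∑ i, x i - (1 - ε) * ∑ i, g i + k * ∑ i, ∑ j ∈ N i, g j := by
      rw [Finset.mul_sum, Finset.mul_sum, ← Finset.sum_sub_distrib, ← Finset.sum_add_distrib]
      exact Finset.sum_congr rfl fun i _ => hfi i
    rw [h3, hswap]
    have h4 : ∑ j, k * ((2 * (d : ℝ)) - (N j).card) * g j =
        (1 - ε) * ∑ j, g j - k * ∑ j, ((N j).card : ℝ) * g j := by
      rw [Finset.mul_sum, Finset.mul_sum, ← Finset.sum_sub_distrib]
      apply Finset.sum_congr rfl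
      intro j _
      rw [← hk2d]
      ring
    rw [h4]
    ring
  constructor
  · rw [key]
    constructor
    · intro heq i hib
      have hsum : ∑ j, k * ((2 * (d : ℝ)) - (N j).card) * g j = 0 := by linarith
      have := (Finset.sum_eq_zero_iff_of_nonneg (fun j _ => hterm0 j)).mp hsum i (mem_univ i)
      have hci : (0 : ℝ) < (2 * (d : ℝ)) - (N i).card := by
        have hib' : (N i).card < 2 * d := hib
        have : ((N i).card : ℝ) < ((2 * d : ℕ) : ℝ) := by exact_mod_cast hib'
        push_cast at this
        linarith
      have hgz : g i = 0 := by
        rcases mul_eq_zero.mp this with h | h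
        · rcases mul_eq_zero.mp h with h | h
          · exact absurd h (ne_of_gt hk)
          · exact absurd h (ne_of_gt hci)
        · exact h
      exact (hgiff i).mp hgz
    · intro hb
      have : ∑ j, k * ((2 * (d : ℝ)) - (N j).card) * g j = 0 := by
        apply Finset.sum_eq_zero
        intro j _
        by_cases hj : isBoundary j
        · rw [(hgiff j).mpr (hb j hj), mul_zero]
        · have : (N j).card = 2 * d := by
            have h1 : (N j).card ≤ 2 * d := neighbors_card_le (L := L) hd j
            have h2 : ¬ ((N j).card < 2 * d) := hj
            omega
          rw [this]
          push_cast
          ring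
      rw [this]
      ring
  · rintro ⟨i, hib, hxi⟩
    rw [key]
    have hsum : k * Ec ≤ ∑ j, k * ((2 * (d : ℝ)) - (N j).card) * g j := by
      have hle : k * Ec ≤ k * ((2 * (d : ℝ)) - (N i).card) * g i := by
        have hci : (1 : ℝ) ≤ (2 * (d : ℝ)) - (N i).card := by
          have hib' : (N i).card + 1 ≤ 2 * d := hib
          have : ((N i).card : ℝ) + 1 ≤ ((2 * d : ℕ) : ℝ) := by exact_mod_cast hib'
          push_cast at this
          linarith
        have hgi : g i = x i := by
          simp only [hgdef, theta]
          rw [if_pos (by linarith)]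
          ring
        rw [hgi]
        calc k * Ec = k * 1 * Ec := by ring
          _ ≤ k * ((2 * (d : ℝ)) - (N i).card) * x i := by
              apply mul_le_mul
              · apply mul_le_mul_of_nonneg_left hci hk.le
              · linarith
              · linarith
              · positivity
      calc k * Ec ≤ k * ((2 * (d : ℝ)) - (N i).card) * g i := hle
        _ ≤ ∑ j, k * ((2 * (d : ℝ)) - (N j).card) * g j :=
            Finset.single_le_sum (fun j _ => hterm0 j) (mem_univ i)
    linarith
end

section
/- Every configuration stabilizes in finitely many relaxation steps: for all x ∈ ℝ_{≥0}^N, the first time m(x) = min{n ≥ 0 : f^n(x) ∈ [0,E_c]^N} satisfies m(x) ≤ (2dN/(1−ε)) · (‖x‖₁/E_c) · (2d/(1−ε) + 1)^{diam(Λ)/2}. -/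
open Finset

section Aux
variable {d L : ℕ}

lemma dLam_eq_one {i j : Site d L} (h : dLam i j = 1) :
    ∃ n, ((i n : ℤ) - (j n : ℤ)).natAbs = 1 ∧ ∀ m, m ≠ n → i m = j m := by
  classical
  unfold dLam at h
  obtain ⟨n, -, hn⟩ := Finset.exists_ne_zero_of_sum_ne_zero (h ▸ one_ne_zero)
  have hle : ((i n : ℤ) - (j n : ℤ)).natAbs ≤ 1 := by
    rw [← h]
    exact Finset.single_le_sum (f := fun m => ((i m : ℤ) - (j m : ℤ)).natAbs)
      (fun m _ => Nat.zero_le _) (mem_univ n)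
  have hone : ((i n : ℤ) - (j n : ℤ)).natAbs = 1 := by omega
  refine ⟨n, hone, fun m hm => ?_⟩
  have hrest : ∑ m ∈ univ.erase n, ((i m : ℤ) - (j m : ℤ)).natAbs = 0 := by
    have := Finset.add_sum_erase univ (fun m => ((i m : ℤ) - (j m : ℤ)).natAbs) (mem_univ n)
    omega
  have h0 : ((i m : ℤ) - (j m : ℤ)).natAbs = 0 :=
    (Finset.sum_eq_zero_iff.mp hrest) m (Finset.mem_erase.mpr ⟨hm, mem_univ m⟩)
  have : (i m : ℤ) = (j m : ℤ) := by omega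
  exact Fin.ext (by exact_mod_cast this)

end Aux

section Wgt
variable {e L : ℕ}

noncomputable def wgt (e L : ℕ) (i : Site (e+1) L) : ℝ :=
  (L : ℝ)^2 - ((i 0 : ℕ) : ℝ)^2

def nbrs (j : Site (e+1) L) : Finset (Site (e+1) L) :=
  univ.filter fun i => dLam i j = 1

lemma wgt_nonneg (i : Site (e+1) L) : 0 ≤ wgt e L i := by
  have h : ((i 0 : ℕ) : ℝ) ≤ (L : ℝ) := by
    exact_mod_cast (i 0).isLt.le
  have h0 : (0:ℝ) ≤ ((i 0 : ℕ) : ℝ) := Nat.cast_nonneg _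
  unfold wgt
  nlinarith

lemma wgt_le (i : Site (e+1) L) : wgt e L i ≤ (L:ℝ)^2 := by
  unfold wgt
  nlinarith [sq_nonneg (((i 0 : ℕ)):ℝ)]

/-- elements of the `n`-fiber of neighbours agree with `j` off `n` and differ by ±1 at `n`. -/
lemma fiber_mem {j i : Site (e+1) L} {n : Fin (e+1)}
    (hi : i ∈ (nbrs j).filter (fun i => i n ≠ j n)) :
    ((i n : ℤ) = (j n : ℤ) + 1 ∨ (i n : ℤ) = (j n : ℤ) - 1) ∧ ∀ m, m ≠ n → i m = j m := by
  classical
  rw [Finset.mem_filter] at hi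
  obtain ⟨hmem, hne⟩ := hi
  have h1 : dLam i j = 1 := (Finset.mem_filter.mp hmem).2
  obtain ⟨n₀, habs, hoff⟩ := dLam_eq_one h1
  have hnn : n = n₀ := by
    by_contra hc
    exact hne (hoff n hc)
  subst hnn
  constructor
  · rcases Int.natAbs_eq_iff.mp habs with h | h
    · left; omega
    · right; omega
  · exact hoff

lemma fiber_card {j : Site (e+1) L} {n : Fin (e+1)} :
    ((nbrs j).filter (fun i => i n ≠ j n)).card ≤ 2 := by
  classical
  have : ((nbrs j).filter (fun i => i n ≠ j n)).card ≤ ({-1, 1} : Finset ℤ).card := by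
    apply Finset.card_le_card_of_injOn (fun i => (i n : ℤ) - (j n : ℤ))
    · intro i hi
      rcases (fiber_mem hi).1 with h | h <;> simp [h]
    · intro a ha b hb hab
      simp only at hab
      funext m
      by_cases hm : m = n
      · subst hm
        have : (a m : ℤ) = (b m : ℤ) := by omega
        exact Fin.ext (by exact_mod_cast this)
      · rw [(fiber_mem ha).2 m hm, (fiber_mem hb).2 m hm]
  simpa using this

lemma fiber_eq {j : Site (e+1) L} {n : Fin (e+1)} {a b : Site (e+1) L}
    (ha : a ∈ (nbrs j).filter (fun i => i n ≠ j n))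
    (hb : b ∈ (nbrs j).filter (fun i => i n ≠ j n))
    (h : a n = b n) : a = b := by
  funext m
  by_cases hm : m = n
  · subst hm; exact h
  · rw [(fiber_mem ha).2 m hm, (fiber_mem hb).2 m hm]

end Wgt

section Wgt2
variable {e L : ℕ}

lemma fiber0_sum (hL : 0 < L) (j : Site (e+1) L) :
    ∑ i ∈ (nbrs j).filter (fun i => i 0 ≠ j 0), wgt e L i ≤ 2 * wgt e L j - 2 := by
  classical
  set S := (nbrs j).filter (fun i => i 0 ≠ j 0) with hS
  set k : ℝ := ((j 0 : ℕ) : ℝ) with hk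
  have hkL : k + 1 ≤ (L : ℝ) := by
    have := (j 0).isLt
    rw [hk]
    exact_mod_cast Nat.succ_le_of_lt this
  have hk0 : 0 ≤ k := Nat.cast_nonneg _
  set p : Site (e+1) L → Prop := fun i => (i 0 : ℤ) = (j 0 : ℤ) + 1 with hp
  have hsplit := Finset.sum_filter_add_sum_filter_not S p (wgt e L)
  -- bound on the A part
  have hA : ∑ i ∈ S.filter p, wgt e L i ≤ (L:ℝ)^2 - (k+1)^2 := by
    have hc : (0:ℝ) ≤ (L:ℝ)^2 - (k+1)^2 := by nlinarith
    have hval : ∀ a ∈ S.filter p, wgt e L a ≤ (L:ℝ)^2 - (k+1)^2 := by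
      intro a ha
      rw [Finset.mem_filter] at ha
      have : ((a 0 : ℕ) : ℝ) = k + 1 := by
        have h2 : ((a 0 : ℕ) : ℤ) = ((j 0 : ℕ) : ℤ) + 1 := ha.2
        rw [hk]; exact_mod_cast h2
      unfold wgt
      rw [this]
    calc ∑ i ∈ S.filter p, wgt e L i ≤ (S.filter p).card • ((L:ℝ)^2 - (k+1)^2) :=
          Finset.sum_le_card_nsmul _ _ _ hval
      _ = ((S.filter p).card : ℝ) * ((L:ℝ)^2 - (k+1)^2) := by rw [nsmul_eq_mul]
      _ ≤ 1 * ((L:ℝ)^2 - (k+1)^2) := by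
          apply mul_le_mul_of_nonneg_right _ hc
          have : (S.filter p).card ≤ 1 := by
            apply Finset.card_le_one.mpr
            intro a ha b hb
            rw [Finset.mem_filter] at ha hb
            apply fiber_eq ha.1 hb.1
            have : ((a 0 : ℕ) : ℤ) = ((b 0 : ℕ) : ℤ) := by rw [ha.2, hb.2]
            exact Fin.ext (by exact_mod_cast this)
          exact_mod_cast this
      _ = (L:ℝ)^2 - (k+1)^2 := one_mul _
  -- elements of the B part have value j0 - 1
  have hBval : ∀ a ∈ S.filter (fun i => ¬ p i), ((a 0 : ℕ) : ℤ) = ((j 0:ℕ) : ℤ) - 1 := by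
    intro a ha
    rw [Finset.mem_filter] at ha
    rcases (fiber_mem ha.1).1 with h | h
    · exact absurd h ha.2
    · exact h
  by_cases hk1 : (j 0 : ℕ) = 0
  · -- B is empty
    have hB : S.filter (fun i => ¬ p i) = ∅ := by
      apply Finset.eq_empty_of_forall_notMem
      intro a ha
      have := hBval a ha
      rw [hk1] at this
      omega
    have hwj : wgt e L j = (L:ℝ)^2 := by
      unfold wgt; rw [hk1]; norm_num
    rw [← hsplit, hB]
    simp only [Finset.sum_empty, add_zero]
    have hL1 : (1:ℝ) ≤ (L:ℝ) := by exact_mod_cast hL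
    have : k = 0 := by rw [hk, hk1]; norm_num
    rw [hwj]
    nlinarith [hA, this]
  · -- k ≥ 1
    have hk1' : (1:ℝ) ≤ k := by
      rw [hk]; exact_mod_cast Nat.one_le_iff_ne_zero.mpr hk1
    have hB : ∑ i ∈ S.filter (fun i => ¬ p i), wgt e L i ≤ (L:ℝ)^2 - (k-1)^2 := by
      have hc : (0:ℝ) ≤ (L:ℝ)^2 - (k-1)^2 := by nlinarith
      have hval : ∀ a ∈ S.filter (fun i => ¬ p i), wgt e L a ≤ (L:ℝ)^2 - (k-1)^2 := by
        intro a ha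
        have h2 := hBval a ha
        have : ((a 0 : ℕ) : ℝ) = k - 1 := by
          rw [hk]
          have : ((a 0 : ℕ) : ℝ) = (((j 0:ℕ) : ℤ) - 1 : ℤ) := by exact_mod_cast h2
          rw [this]
          push_cast
          ring
        unfold wgt
        rw [this]
      calc ∑ i ∈ S.filter (fun i => ¬ p i), wgt e L i
          ≤ (S.filter (fun i => ¬ p i)).card • ((L:ℝ)^2 - (k-1)^2) :=
          Finset.sum_le_card_nsmul _ _ _ hval
        _ = ((S.filter (fun i => ¬ p i)).card : ℝ) * ((L:ℝ)^2 - (k-1)^2) := by rw [nsmul_eq_mul]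
        _ ≤ 1 * ((L:ℝ)^2 - (k-1)^2) := by
            apply mul_le_mul_of_nonneg_right _ hc
            have : (S.filter (fun i => ¬ p i)).card ≤ 1 := by
              apply Finset.card_le_one.mpr
              intro a ha b hb
              have h1 := hBval a ha
              have h2 := hBval b hb
              rw [Finset.mem_filter] at ha hb
              apply fiber_eq ha.1 hb.1
              have : ((a 0 : ℕ) : ℤ) = ((b 0 : ℕ) : ℤ) := by rw [h1, h2]
              exact Fin.ext (by exact_mod_cast this)
            exact_mod_cast this
        _ = (L:ℝ)^2 - (k-1)^2 := one_mul _
    have hwj : wgt e L j = (L:ℝ)^2 - k^2 := rfl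
    rw [← hsplit, hwj]
    nlinarith [hA, hB]

end Wgt2

section Wgt3
variable {e L : ℕ}

lemma fibern_sum {n : Fin (e+1)} (hn : n ≠ 0) (j : Site (e+1) L) :
    ∑ i ∈ (nbrs j).filter (fun i => i n ≠ j n), wgt e L i ≤ 2 * wgt e L j := by
  classical
  have hval : ∀ a ∈ (nbrs j).filter (fun i => i n ≠ j n), wgt e L a ≤ wgt e L j := by
    intro a ha
    have h0 : a 0 = j 0 := (fiber_mem ha).2 0 (Ne.symm hn)
    unfold wgt
    rw [h0]
  calc ∑ i ∈ (nbrs j).filter (fun i => i n ≠ j n), wgt e L i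
      ≤ ((nbrs j).filter (fun i => i n ≠ j n)).card • wgt e L j :=
        Finset.sum_le_card_nsmul _ _ _ hval
    _ = (((nbrs j).filter (fun i => i n ≠ j n)).card : ℝ) * wgt e L j := by rw [nsmul_eq_mul]
    _ ≤ 2 * wgt e L j := by
        apply mul_le_mul_of_nonneg_right _ (wgt_nonneg j)
        exact_mod_cast fiber_card

lemma sum_wgt_nbrs_le (hL : 0 < L) (j : Site (e+1) L) :
    ∑ i ∈ nbrs j, wgt e L i ≤ 2 * (e+1) * wgt e L j - 2 := by
  classical
  -- fiberwise decomposition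
  set g : Site (e+1) L → Fin (e+1) := fun i =>
    if h : ∃ n, i n ≠ j n then h.choose else 0 with hg
  have hdec : ∑ i ∈ nbrs j, wgt e L i
      = ∑ n : Fin (e+1), ∑ i ∈ (nbrs j).filter (fun i => g i = n), wgt e L i := by
    rw [Finset.sum_fiberwise_of_maps_to (fun i _ => Finset.mem_univ (g i))]
  have hfib : ∀ n : Fin (e+1),
      (nbrs j).filter (fun i => g i = n) = (nbrs j).filter (fun i => i n ≠ j n) := by
    intro n
    ext i
    simp only [Finset.mem_filter, and_congr_right_iff]
    intro hi
    have h1 : dLam i j = 1 := (Finset.mem_filter.mp hi).2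
    obtain ⟨n₀, habs, hoff⟩ := dLam_eq_one h1
    have hne0 : i n₀ ≠ j n₀ := by
      intro h
      rw [h] at habs
      simp at habs
    have hgi : g i = n₀ := by
      rw [hg]
      have hex : ∃ n, i n ≠ j n := ⟨n₀, hne0⟩
      simp only [dif_pos hex]
      by_contra hc
      exact hex.choose_spec (hoff _ hc)
    constructor
    · intro h
      rw [hgi] at h
      rw [← h]
      exact hne0
    · intro h
      have hn : n = n₀ := by
        by_contra hc
        exact h (hoff n hc)
      rw [hgi, hn]
  rw [hdec]
  simp_rw [hfib]
  rw [Fin.sum_univ_succ]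
  have h0 : ∑ i ∈ (nbrs j).filter (fun i => i 0 ≠ j 0), wgt e L i ≤ 2 * wgt e L j - 2 :=
    fiber0_sum hL j
  have hrest : ∑ n : Fin e, ∑ i ∈ (nbrs j).filter (fun i => i n.succ ≠ j n.succ), wgt e L i
      ≤ (e : ℝ) * (2 * wgt e L j) := by
    calc ∑ n : Fin e, ∑ i ∈ (nbrs j).filter (fun i => i n.succ ≠ j n.succ), wgt e L i
        ≤ (univ : Finset (Fin e)).card • (2 * wgt e L j) :=
          Finset.sum_le_card_nsmul _ _ _ (fun n _ => fibern_sum (Fin.succ_ne_zero n) j)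
      _ = (e : ℝ) * (2 * wgt e L j) := by
          rw [nsmul_eq_mul]; simp
  have := wgt_nonneg (e := e) (L := L) j
  nlinarith [h0, hrest]

end Wgt3

section Dyn
variable {e L : ℕ} {Ec ε : ℝ}

noncomputable def Wsum (e L : ℕ) (x : Site (e+1) L → ℝ) : ℝ :=
  ∑ i, wgt e L i * x i

lemma theta_nonneg (a : ℝ) : 0 ≤ theta a := by
  unfold theta; split <;> norm_num

lemma theta_le_one (a : ℝ) : theta a ≤ 1 := by
  unfold theta; split <;> norm_num

lemma T_nonneg (x : Site (e+1) L → ℝ) (hx : ∀ i, 0 ≤ x i) (j : Site (e+1) L) :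
    0 ≤ theta (x j - Ec) * x j :=
  mul_nonneg (theta_nonneg _) (hx j)

lemma zhangF_nonneg (hε0 : 0 ≤ ε) (hε1 : ε ≤ 1) (x : Site (e+1) L → ℝ)
    (hx : ∀ i, 0 ≤ x i) (i : Site (e+1) L) :
    0 ≤ zhangF (e+1) L Ec ε x i := by
  unfold zhangF
  have h1 : 0 ≤ x i - theta (x i - Ec) * (1 - ε) * x i := by
    have hθ : theta (x i - Ec) * (1 - ε) ≤ 1 :=
      mul_le_one₀ (theta_le_one _) (by linarith) (by linarith)
    have := mul_le_mul_of_nonneg_right hθ (hx i)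
    linarith [hx i]
  have h2 : 0 ≤ ((1 - ε) / (2 * ((e:ℝ)+1))) *
      ∑ j ∈ univ.filter (fun j => dLam i j = 1), theta (x j - Ec) * x j := by
    apply mul_nonneg
    · apply div_nonneg (by linarith)
      positivity
    · exact Finset.sum_nonneg fun j _ => T_nonneg x hx j
  push_cast
  push_cast at h2
  linarith

lemma swap_sum (F G : Site (e+1) L → ℝ) :
    ∑ i, F i * ∑ j ∈ univ.filter (fun j => dLam i j = 1), G j
      = ∑ j, (∑ i ∈ nbrs j, F i) * G j := by
  classical
  have h1 : ∀ i : Site (e+1) L,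
      F i * ∑ j ∈ univ.filter (fun j => dLam i j = 1), G j
        = ∑ j : Site (e+1) L, if dLam i j = 1 then F i * G j else 0 := by
    intro i
    rw [Finset.mul_sum, Finset.sum_filter]
  have h2 : ∀ j : Site (e+1) L,
      (∑ i ∈ nbrs j, F i) * G j
        = ∑ i : Site (e+1) L, if dLam i j = 1 then F i * G j else 0 := by
    intro j
    rw [Finset.sum_mul]
    unfold nbrs
    rw [Finset.sum_filter]
  simp_rw [h1, h2]
  exact Finset.sum_comm
end Dyn

section Dyn2
variable {e L : ℕ} {Ec ε : ℝ}

lemma Wsum_decrease (hL : 0 < L) (hEc : 0 < Ec) (hε1 : ε < 1)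
    (x : Site (e+1) L → ℝ) (hx : ∀ i, 0 ≤ x i) (j₀ : Site (e+1) L) (hun : Ec < x j₀) :
    Wsum e L (zhangF (e+1) L Ec ε x) ≤ Wsum e L x - (1-ε)*Ec/((e:ℝ)+1) := by
  classical
  set D : ℝ := (e:ℝ)+1 with hD
  have hD0 : 0 < D := by positivity
  have hc0 : 0 ≤ (1-ε)/(2*D) := by
    apply div_nonneg (by linarith); linarith
  have expand : ∀ i, wgt e L i * zhangF (e+1) L Ec ε x i
      = wgt e L i * x i - (1-ε) * (wgt e L i * (theta (x i - Ec) * x i))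
        + ((1-ε)/(2*D)) * (wgt e L i *
            ∑ j ∈ univ.filter (fun j => dLam i j = 1), theta (x j - Ec) * x j) := by
    intro i
    unfold zhangF
    rw [hD]
    push_cast
    ring
  have E1 : Wsum e L (zhangF (e+1) L Ec ε x)
      = Wsum e L x - (1-ε) * ∑ i, wgt e L i * (theta (x i - Ec) * x i)
        + ((1-ε)/(2*D)) * ∑ i, wgt e L i *
            ∑ j ∈ univ.filter (fun j => dLam i j = 1), theta (x j - Ec) * x j := by
    unfold Wsum
    simp_rw [expand]
    rw [Finset.sum_add_distrib, Finset.sum_sub_distrib, ← Finset.mul_sum, ← Finset.mul_sum]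
  rw [E1, swap_sum (wgt e L) (fun j => theta (x j - Ec) * x j)]
  have hsum : (- ((1-ε) * ∑ i, wgt e L i * (theta (x i - Ec) * x i)))
      + ((1-ε)/(2*D)) * ∑ j, (∑ i ∈ nbrs j, wgt e L i) * (theta (x j - Ec) * x j)
      = ∑ j, (((1-ε)/(2*D)) * (∑ i ∈ nbrs j, wgt e L i) - (1-ε) * wgt e L j)
          * (theta (x j - Ec) * x j) := by
    rw [Finset.mul_sum, Finset.mul_sum, neg_add_eq_sub, ← Finset.sum_sub_distrib]
    apply Finset.sum_congr rfl
    intro j _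
    ring
  have hcoef : ∀ j : Site (e+1) L,
      ((1-ε)/(2*D)) * (∑ i ∈ nbrs j, wgt e L i) - (1-ε) * wgt e L j ≤ -((1-ε)/D) := by
    intro j
    have h1 := sum_wgt_nbrs_le hL j
    have h2 : ((1-ε)/(2*D)) * (∑ i ∈ nbrs j, wgt e L i)
        ≤ ((1-ε)/(2*D)) * (2*(e+1) * wgt e L j - 2) :=
      mul_le_mul_of_nonneg_left h1 hc0
    have hDe : ((e:ℝ)+1) = D := rfl
    have h3 : ((1-ε)/(2*D)) * (2*(e+1) * wgt e L j - 2)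
        = (1-ε) * wgt e L j - (1-ε)/D := by
      push_cast
      rw [← hDe]
      field_simp
    linarith
  have hterm : ∀ j : Site (e+1) L,
      (((1-ε)/(2*D)) * (∑ i ∈ nbrs j, wgt e L i) - (1-ε) * wgt e L j)
        * (theta (x j - Ec) * x j) ≤ -((1-ε)/D) * (theta (x j - Ec) * x j) :=
    fun j => mul_le_mul_of_nonneg_right (hcoef j) (T_nonneg x hx j)
  have htermle : ∀ j : Site (e+1) L,
      (((1-ε)/(2*D)) * (∑ i ∈ nbrs j, wgt e L i) - (1-ε) * wgt e L j)
        * (theta (x j - Ec) * x j) ≤ 0 := by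
    intro j
    refine le_trans (hterm j) ?_
    have h1 : 0 ≤ (1-ε)/D := div_nonneg (by linarith) hD0.le
    nlinarith [T_nonneg (Ec := Ec) x hx j]
  have hj0 : (((1-ε)/(2*D)) * (∑ i ∈ nbrs j₀, wgt e L i) - (1-ε) * wgt e L j₀)
        * (theta (x j₀ - Ec) * x j₀) ≤ -((1-ε)*Ec/D) := by
    refine le_trans (hterm j₀) ?_
    have hθ : theta (x j₀ - Ec) = 1 := by
      unfold theta
      rw [if_pos (by linarith)]
    rw [hθ, one_mul]
    have h1 : 0 ≤ (1-ε)/D := div_nonneg (by linarith) hD0.le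
    have h2 : Ec ≤ x j₀ := hun.le
    have := mul_le_mul_of_nonneg_left h2 h1
    have heq : (1-ε)/D * Ec = (1-ε)*Ec/D := by ring
    nlinarith
  have hfull : ∑ j, (((1-ε)/(2*D)) * (∑ i ∈ nbrs j, wgt e L i) - (1-ε) * wgt e L j)
          * (theta (x j - Ec) * x j) ≤ -((1-ε)*Ec/D) := by
    have hsplit := Finset.add_sum_erase univ
      (fun j => (((1-ε)/(2*D)) * (∑ i ∈ nbrs j, wgt e L i) - (1-ε) * wgt e L j)
          * (theta (x j - Ec) * x j)) (mem_univ j₀)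
    have hrest : ∑ j ∈ univ.erase j₀,
        (((1-ε)/(2*D)) * (∑ i ∈ nbrs j, wgt e L i) - (1-ε) * wgt e L j)
          * (theta (x j - Ec) * x j) ≤ 0 :=
      Finset.sum_nonpos fun j _ => htermle j
    rw [← hsplit]
    linarith
  linarith [hsum, hfull]
end Dyn2

section Dyn3
variable {e L : ℕ} {Ec ε : ℝ}

lemma norm1_nonneg (x : Site (e+1) L → ℝ) : 0 ≤ norm1 x :=
  Finset.sum_nonneg fun i _ => abs_nonneg _

lemma Wsum_nonneg (x : Site (e+1) L → ℝ) (hx : ∀ i, 0 ≤ x i) : 0 ≤ Wsum e L x :=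
  Finset.sum_nonneg fun i _ => mul_nonneg (wgt_nonneg i) (hx i)

lemma Wsum_le_norm1 (x : Site (e+1) L → ℝ) (hx : ∀ i, 0 ≤ x i) :
    Wsum e L x ≤ (L:ℝ)^2 * norm1 x := by
  unfold Wsum norm1
  rw [Finset.mul_sum]
  apply Finset.sum_le_sum
  intro i _
  rw [abs_of_nonneg (hx i)]
  exact mul_le_mul_of_nonneg_right (wgt_le i) (hx i)

lemma exists_stable (hL : 0 < L) (hEc : 0 < Ec) (hε0 : 0 ≤ ε) (hε1 : ε < 1) :
    ∀ N : ℕ, ∀ x : Site (e+1) L → ℝ, (∀ i, 0 ≤ x i) →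
      Wsum e L x < (N+1) * ((1-ε)*Ec/((e:ℝ)+1)) →
      ∃ n ≤ N, ∀ i, (zhangF (e+1) L Ec ε)^[n] x i ≤ Ec := by
  intro N
  induction N with
  | zero =>
    intro x hx hW
    by_cases hstab : ∀ i, x i ≤ Ec
    · exact ⟨0, le_refl 0, by simpa using hstab⟩
    · exfalso
      push_neg at hstab
      obtain ⟨j₀, hj₀⟩ := hstab
      have hdec := Wsum_decrease hL hEc hε1 x hx j₀ hj₀
      have hnn := Wsum_nonneg (zhangF (e+1) L Ec ε x)
        (zhangF_nonneg hε0 hε1.le x hx)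
      push_cast at hW
      linarith
  | succ N ih =>
    intro x hx hW
    by_cases hstab : ∀ i, x i ≤ Ec
    · exact ⟨0, Nat.zero_le _, by simpa using hstab⟩
    · push_neg at hstab
      obtain ⟨j₀, hj₀⟩ := hstab
      have hdec := Wsum_decrease hL hEc hε1 x hx j₀ hj₀
      have hx' := zhangF_nonneg (Ec := Ec) hε0 hε1.le x hx
      have hW' : Wsum e L (zhangF (e+1) L Ec ε x) < (N+1) * ((1-ε)*Ec/((e:ℝ)+1)) := by
        push_cast at hW ⊢
        linarith
      obtain ⟨n, hn, hstable⟩ := ih (zhangF (e+1) L Ec ε x) hx' hW'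
      refine ⟨n+1, Nat.succ_le_succ hn, ?_⟩
      intro i
      rw [Function.iterate_succ_apply]
      exact hstable i

lemma coeff_le (e L : ℕ) (hL : 0 < L) (hε0 : 0 ≤ ε) (hε1 : ε < 1) :
    ((e:ℝ)+1) * (L:ℝ)^2 ≤ 2 * ((e:ℝ)+1) * ((L^(e+1) : ℕ) : ℝ) *
      (2*((e:ℝ)+1)/(1-ε)+1) ^ ((((e+1)*(L-1) : ℕ) : ℝ)/2) := by
  set β : ℝ := 2*((e:ℝ)+1)/(1-ε)+1 with hβ
  set ex : ℝ := (((e+1)*(L-1) : ℕ) : ℝ)/2 with hex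
  have he0 : (0:ℝ) ≤ (e:ℝ) := Nat.cast_nonneg e
  have hβ3 : (3:ℝ) ≤ β := by
    have h1 : 2*((e:ℝ)+1) ≤ 2*((e:ℝ)+1)/(1-ε) := by
      rw [le_div_iff₀ (by linarith)]
      nlinarith
    rw [hβ]
    linarith
  have hex0 : 0 ≤ ex := by
    rw [hex]; positivity
  set m := L - 1 with hm
  have hmL : ((m:ℕ):ℝ) = (L:ℝ) - 1 := by
    rw [hm, Nat.cast_sub hL]
    norm_num
  have step1 : (3:ℝ) ^ (((m:ℕ):ℝ)/2) ≤ β ^ ex := by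
    have hle : ((m:ℕ):ℝ)/2 ≤ ex := by
      rw [hex]
      have : (m:ℕ) ≤ (e+1)*(L-1) := Nat.le_mul_of_pos_left _ (Nat.succ_pos e)
      have : ((m:ℕ):ℝ) ≤ (((e+1)*(L-1) : ℕ) : ℝ) := by exact_mod_cast this
      linarith
    calc (3:ℝ) ^ (((m:ℕ):ℝ)/2) ≤ (3:ℝ) ^ ex :=
          Real.rpow_le_rpow_of_exponent_le (by norm_num) hle
      _ ≤ β ^ ex := Real.rpow_le_rpow (by norm_num) hβ3 hex0
  have step2 : ((L:ℝ)+1)/2 ≤ (3:ℝ) ^ (((m:ℕ):ℝ)/2) := by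
    have hsq : (3:ℝ) ^ (((m:ℕ):ℝ)/2) = (Real.sqrt 3) ^ (m:ℕ) := by
      rw [Real.sqrt_eq_rpow, ← Real.rpow_natCast ((3:ℝ) ^ ((1:ℝ)/2)) m,
        ← Real.rpow_mul (by norm_num : (0:ℝ) ≤ 3)]
      ring_nf
    have hs32 : (3/2:ℝ) ≤ Real.sqrt 3 := by
      nlinarith [Real.sq_sqrt (by norm_num : (0:ℝ) ≤ 3), Real.sqrt_nonneg 3]
    have h32 : ((3/2:ℝ)) ^ (m:ℕ) ≤ (Real.sqrt 3) ^ (m:ℕ) :=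
      pow_le_pow_left₀ (by norm_num) hs32 m
    have hbern : 1 + ((m:ℕ):ℝ) * (1/2) ≤ ((1:ℝ)+1/2) ^ (m:ℕ) :=
      one_add_mul_le_pow (by norm_num) m
    have : ((1:ℝ)+1/2) = 3/2 := by norm_num
    rw [this] at hbern
    rw [hsq]
    rw [hmL] at hbern
    linarith
  have hLd : (L:ℝ) ≤ ((L^(e+1) : ℕ) : ℝ) := by
    exact_mod_cast Nat.le_self_pow (Nat.succ_ne_zero e) L
  have hB0 : 0 ≤ β ^ ex := Real.rpow_nonneg (by linarith) ex
  have hL0 : (0:ℝ) ≤ (L:ℝ) := Nat.cast_nonneg L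
  have hBL : (L:ℝ)/2 ≤ β ^ ex := by linarith
  nlinarith [mul_le_mul_of_nonneg_right hLd hB0, mul_le_mul_of_nonneg_left hBL hL0,
    mul_le_mul_of_nonneg_right hBL hL0]

end Dyn3


theorem zhang_stabilization_time
    (d L : ℕ) (hd : 0 < d) (hL : 0 < L)
    (Ec ε : ℝ) (hEc : 0 < Ec) (hε0 : 0 ≤ ε) (hε1 : ε < 1)
    (x : Site d L → ℝ) (hx : ∀ i, 0 ≤ x i) :
    ∃ n : ℕ, (∀ i, (zhangF d L Ec ε)^[n] x i ≤ Ec) ∧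
      (n : ℝ) ≤ (2 * d * (L ^ d : ℕ) / (1 - ε)) * (norm1 x / Ec) *
        (2 * d / (1 - ε) + 1) ^ (((d * (L - 1) : ℕ) : ℝ) / 2) := by
  obtain ⟨e, rfl⟩ : ∃ e, d = e + 1 := ⟨d - 1, (Nat.succ_pred_eq_of_pos hd).symm⟩
  set δ : ℝ := (1-ε)*Ec/((e:ℝ)+1) with hδdef
  have hδ : 0 < δ := by
    rw [hδdef]
    apply div_pos (by nlinarith) (by positivity)
  set N : ℕ := ⌊Wsum e L x / δ⌋₊ with hN
  have hWlt : Wsum e L x < (N+1) * δ := by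
    have h1 : Wsum e L x / δ < (N:ℝ) + 1 := Nat.lt_floor_add_one _
    rw [div_lt_iff₀ hδ] at h1
    linarith
  obtain ⟨n, hn, hstable⟩ := exists_stable hL hEc hε0 hε1 N x hx (by push_cast; push_cast at hWlt; linarith)
  refine ⟨n, hstable, ?_⟩
  have hWnn : 0 ≤ Wsum e L x := Wsum_nonneg x hx
  have hle1 : (n:ℝ) ≤ Wsum e L x / δ := by
    have h1 : (n:ℝ) ≤ (N:ℝ) := by exact_mod_cast hn
    have h2 : (N:ℝ) ≤ Wsum e L x / δ := Nat.floor_le (by positivity)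
    linarith
  have hle2 : Wsum e L x / δ ≤ ((L:ℝ)^2 * norm1 x) / δ := by
    gcongr
    exact Wsum_le_norm1 x hx
  have heq : ((L:ℝ)^2 * norm1 x)/δ = (((e:ℝ)+1) * (L:ℝ)^2) * (norm1 x / ((1-ε)*Ec)) := by
    rw [hδdef]
    field_simp
  have hfac : 0 ≤ norm1 x / ((1-ε)*Ec) := div_nonneg (norm1_nonneg x) (by nlinarith)
  have hcoe := mul_le_mul_of_nonneg_right (coeff_le e L hL hε0 hε1) hfac
  have hRHS : (2 * ((e:ℝ)+1) * ((L^(e+1):ℕ):ℝ) *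
        (2*((e:ℝ)+1)/(1-ε)+1) ^ ((((e+1)*(L-1) : ℕ) : ℝ)/2)) * (norm1 x/((1-ε)*Ec))
      = (2 * ((e+1 : ℕ):ℝ) * ((L ^ (e+1) : ℕ):ℝ) / (1 - ε)) * (norm1 x / Ec) *
        (2 * ((e+1:ℕ):ℝ) / (1 - ε) + 1) ^ ((((e+1) * (L - 1) : ℕ) : ℝ) / 2) := by
    push_cast
    have hEc' : Ec ≠ 0 := ne_of_gt hEc
    have hε' : (1-ε) ≠ 0 := by linarith
    field_simp
  push_cast
  push_cast at hRHS hcoe heq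
  linarith
end

section
/- For every x ∈ ℝ_{≥0}^N, the matrix identity f(x) = S(x)·x holds, where S(x) = J(x) + (1−ε)Q(x), Q_{kl}(x) = (1/(2d))θ(x_l − E_c) if d_Λ(k,l)=1 and 0 otherwise, and J(x) is the diagonal matrix with J_{ll}(x) = 1 − (1−ε)θ(x_l − E_c). Moreover every column of S(x) has 1-norm at most 1. -/
open Finset

open Matrix

/-- The matrix `Q(x)`. -/
noncomputable def Qmat (d L : ℕ) (Ec : ℝ) (x : Site d L → ℝ) :
    Matrix (Site d L) (Site d L) ℝ :=
  fun k l => if dLam k l = 1 then (1 / (2 * d)) * theta (x l - Ec) else 0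

/-- The diagonal matrix `J(x)`. -/
noncomputable def Jmat (d L : ℕ) (Ec ε : ℝ) (x : Site d L → ℝ) :
    Matrix (Site d L) (Site d L) ℝ :=
  Matrix.diagonal (fun l => 1 - (1 - ε) * theta (x l - Ec))

/-- The one-step relaxation matrix `S(x) = J(x) + (1-ε) Q(x)`. -/
noncomputable def Smat (d L : ℕ) (Ec ε : ℝ) (x : Site d L → ℝ) :
    Matrix (Site d L) (Site d L) ℝ :=
  Jmat d L Ec ε x + (1 - ε) • Qmat d L Ec x

lemma dLam_one_struct {d L : ℕ} {l k : Site d L} (h : dLam l k = 1) {n : Fin d}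
    (hn : l n ≠ k n) :
    (∀ m, m ≠ n → l m = k m) ∧ ((l n : ℤ) - (k n : ℤ)).natAbs = 1 := by
  have hne : ((l n : ℤ) - (k n : ℤ)).natAbs ≠ 0 := by
    simp only [ne_eq, Int.natAbs_eq_zero, sub_eq_zero]
    exact fun hc => hn (by exact_mod_cast Fin.val_injective (by exact_mod_cast hc))
  have hle : ((l n : ℤ) - (k n : ℤ)).natAbs ≤ 1 := by
    rw [← h]
    exact Finset.single_le_sum (f := fun m => ((l m : ℤ) - (k m : ℤ)).natAbs)
      (fun _ _ => Nat.zero_le _) (mem_univ n)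
  have h1 : ((l n : ℤ) - (k n : ℤ)).natAbs = 1 := le_antisymm hle (Nat.one_le_iff_ne_zero.2 hne)
  refine ⟨fun m hm => ?_, h1⟩
  have hsplit : ∑ m ∈ univ.erase n, ((l m : ℤ) - (k m : ℤ)).natAbs = 0 := by
    have h2 := Finset.add_sum_erase univ (fun m => ((l m : ℤ) - (k m : ℤ)).natAbs) (mem_univ n)
    rw [dLam] at h
    omega
  have h3 := (Finset.sum_eq_zero_iff).1 hsplit m (mem_erase.2 ⟨hm, mem_univ m⟩)
  simp only [Int.natAbs_eq_zero, sub_eq_zero] at h3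
  exact Fin.val_injective (by exact_mod_cast h3)

lemma card_neighbors (d L : ℕ) (hd : 0 < d) (k : Site d L) :
    (univ.filter (fun l : Site d L => dLam l k = 1)).card ≤ 2 * d := by
  classical
  have hcard : ((univ : Finset (Fin d × Bool))).card = 2 * d := by
    simp [Finset.card_univ, mul_comm]
  rw [← hcard]
  apply Finset.card_le_card_of_injOn
    (fun l => if h : ∃ n, l n ≠ k n then (h.choose, decide ((k h.choose : ℤ) < l h.choose))
      else (⟨0, hd⟩, false))
  · intro l _; exact mem_univ _
  · intro l₁ hl₁ l₂ hl₂ heq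
    simp only [mem_coe, mem_filter, mem_univ, true_and] at hl₁ hl₂
    have hne₁ : ∃ n, l₁ n ≠ k n := by
      by_contra hc
      push_neg at hc
      have : l₁ = k := funext hc
      subst this
      simp [dLam] at hl₁
    have hne₂ : ∃ n, l₂ n ≠ k n := by
      by_contra hc
      push_neg at hc
      have : l₂ = k := funext hc
      subst this
      simp [dLam] at hl₂
    simp only [dif_pos hne₁, dif_pos hne₂, Prod.mk.injEq] at heq
    obtain ⟨hn, hb⟩ := heq
    obtain ⟨h₁, habs₁⟩ := dLam_one_struct hl₁ hne₁.choose_spec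
    obtain ⟨h₂, habs₂⟩ := dLam_one_struct hl₂ hne₂.choose_spec
    set n := hne₁.choose with hndef
    rw [← hn] at h₂ habs₂
    funext m
    by_cases hm : m = n
    · subst hm
      rw [← hn] at hb
      have hb' : ((k n : ℤ) < l₁ n) ↔ ((k n : ℤ) < l₂ n) := by
        simpa [decide_eq_decide] using hb
      have e1 : (l₁ n : ℤ) = k n + 1 ∨ (l₁ n : ℤ) = k n - 1 := by omega
      have e2 : (l₂ n : ℤ) = k n + 1 ∨ (l₂ n : ℤ) = k n - 1 := by omega
      apply Fin.val_injective
      have h5 : (l₁ n : ℤ) = (l₂ n : ℤ) := by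
        rcases e1 with e1 | e1 <;> rcases e2 with e2 | e2 <;>
          omega
      exact_mod_cast h5
    · rw [h₁ m hm, h₂ m hm]

theorem zhang_relaxation_is_linear
    (d L : ℕ) (hd : 0 < d) (hL : 0 < L)
    (Ec ε : ℝ) (hEc : 0 < Ec) (hε0 : 0 ≤ ε) (hε1 : ε < 1)
    (x : Site d L → ℝ) (hx : ∀ i, 0 ≤ x i) :
    zhangF d L Ec ε x = (Smat d L Ec ε x).mulVec x ∧
      ∀ k, ∑ l, |Smat d L Ec ε x l k| ≤ 1 := by
  classical
  have hθ : ∀ a : ℝ, theta a = 0 ∨ theta a = 1 := by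
    intro a; unfold theta; split <;> simp
  have hθ01 : ∀ a : ℝ, 0 ≤ theta a ∧ theta a ≤ 1 := by
    intro a; rcases hθ a with h | h <;> rw [h] <;> norm_num
  have hd' : (0:ℝ) < 2 * d := by positivity
  have hJ : ∀ a : ℝ, 0 ≤ 1 - (1 - ε) * theta a := by
    intro a; rcases hθ a with h | h <;> rw [h] <;> nlinarith
  constructor
  · funext i
    rw [Matrix.mulVec]
    simp only [Smat, Jmat, Qmat, dotProduct, Matrix.add_apply, Matrix.smul_apply,
      Matrix.diagonal_apply, smul_eq_mul, add_mul, ite_mul, zero_mul, mul_ite, mul_zero]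
    rw [Finset.sum_add_distrib, Finset.sum_ite_eq]
    simp only [mem_univ, if_true]
    rw [← Finset.sum_filter]
    have hcong : ∑ j ∈ univ.filter (fun j => dLam i j = 1),
        (1 - ε) * (1 / (2 * (d:ℝ)) * theta (x j - Ec)) * x j
        = ∑ j ∈ univ.filter (fun j => dLam i j = 1),
          (1 - ε) / (2 * (d:ℝ)) * (theta (x j - Ec) * x j) := by
      apply Finset.sum_congr rfl; intro j _; ring
    rw [hcong, ← Finset.mul_sum]
    unfold zhangF
    ring
  · intro k
    have habs : ∀ l, |Smat d L Ec ε x l k| = Smat d L Ec ε x l k := by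
      intro l
      apply abs_of_nonneg
      simp only [Smat, Jmat, Qmat, Matrix.add_apply, Matrix.smul_apply,
        Matrix.diagonal_apply, smul_eq_mul]
      have h2 : (0:ℝ) ≤ (1 - ε) * (if dLam l k = 1 then 1 / (2 * ↑d) * theta (x k - Ec) else 0) := by
        apply mul_nonneg (by linarith)
        split
        · exact mul_nonneg (by positivity) (hθ01 _).1
        · exact le_rfl
      have h0 : (0:ℝ) ≤ (if l = k then 1 - (1 - ε) * theta (x l - Ec) else 0) := by
        split
        · exact hJ _
        · exact le_rfl
      linarith
    simp only [habs]
    simp only [Smat, Jmat, Qmat, Matrix.add_apply, Matrix.smul_apply,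
      Matrix.diagonal_apply, smul_eq_mul, mul_ite, mul_zero]
    rw [Finset.sum_add_distrib]
    have hdiag : ∑ l : Site d L, (if l = k then 1 - (1 - ε) * theta (x l - Ec) else 0)
        = 1 - (1 - ε) * theta (x k - Ec) := by
      rw [Finset.sum_ite_eq']
      simp
    rw [hdiag, ← Finset.sum_filter, Finset.sum_const, nsmul_eq_mul]
    have hcard := card_neighbors d L hd k
    have hcard' : ((univ.filter (fun l : Site d L => dLam l k = 1)).card : ℝ) ≤ 2 * d := by
      exact_mod_cast hcard
    set c : ℝ := ((univ.filter (fun l : Site d L => dLam l k = 1)).card : ℝ) with hc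
    have hc0 : 0 ≤ c := Nat.cast_nonneg _
    rcases hθ (x k - Ec) with h | h <;> rw [h]
    · ring_nf
      nlinarith
    · have key : c * ((1 - ε) * (1 / (2 * (d:ℝ)) * 1)) ≤ (1 - ε) := by
        have e : c * ((1 - ε) * (1 / (2 * (d:ℝ)) * 1)) = (c / (2 * d)) * (1 - ε) := by ring
        rw [e]
        have hfrac : c / (2 * (d:ℝ)) ≤ 1 := by
          rw [div_le_one hd']; exact hcard'
        nlinarith
      linarith
end

section
/- Suppose E_c ≥ ε/(1−ε). Then no lattice site can be overcritical in two successive time steps of an avalanche: along any relaxation orbit starting from a stable configuration plus one unit of energy, the maximal site energy stays bounded by max{E_c/ε, E_c + 1}, and consequently, for all n, any two sites that are simultaneously overcritical at step n are at even d_Λ-distance from each other; in particular they are never nearest neighbors. -/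
open Finset

/-- checkerboard parity of a site -/
def par {d L : ℕ} (j : Site d L) : ZMod 2 := ∑ n, ((j n : ℕ) : ZMod 2)

lemma natAbs_cast_zmod2 (a : ℤ) : ((a.natAbs : ZMod 2)) = (a : ZMod 2) := by
  have hneg : ∀ x : ZMod 2, -x = x := by decide
  rcases Int.natAbs_eq a with h | h
  · conv_rhs => rw [h, Int.cast_natCast]
  · conv_rhs => rw [h, Int.cast_neg, Int.cast_natCast, hneg]

lemma dLam_cast {d L : ℕ} (j k : Site d L) :
    ((dLam j k : ℕ) : ZMod 2) = par j + par k := by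
  unfold dLam par
  rw [Nat.cast_sum]
  have hneg : ∀ x : ZMod 2, -x = x := by decide
  have h : ∀ n : Fin d,
      ((((j n : ℤ) - (k n : ℤ)).natAbs : ZMod 2)) = ((j n : ℕ) : ZMod 2) + ((k n : ℕ) : ZMod 2) := by
    intro n
    rw [natAbs_cast_zmod2]
    push_cast
    rw [sub_eq_add_neg, hneg]
  rw [Finset.sum_congr rfl (fun n _ => h n), Finset.sum_add_distrib]

lemma even_dLam_iff {d L : ℕ} (j k : Site d L) : Even (dLam j k) ↔ par j = par k := by
  have hmod : ((dLam j k % 2 : ℕ) : ZMod 2) = par j + par k := by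
    rw [ZMod.natCast_mod]; exact dLam_cast j k
  have hadd : ∀ a b : ZMod 2, a + b = 0 → a = b := by decide
  have hne : ∀ a b : ZMod 2, a + b = 1 → a ≠ b := by decide
  rw [Nat.even_iff]
  rcases Nat.mod_two_eq_zero_or_one (dLam j k) with h | h <;> rw [h] at hmod <;> rw [h]
  · push_cast at hmod
    simp only [eq_self_iff_true, true_iff]
    exact hadd _ _ hmod.symm
  · push_cast at hmod
    constructor
    · omega
    · intro hp; exact absurd hp (hne _ _ hmod.symm)

lemma exists_uniq {d L : ℕ} (j j' : Site d L) (h : dLam j j' = 1) :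
    ∃ n : Fin d, (((j n : ℤ) - (j' n : ℤ)).natAbs = 1 ∧ ∀ m, m ≠ n → j m = j' m) := by
  set g := fun m : Fin d => ((j m : ℤ) - (j' m : ℤ)).natAbs with hg
  have hs : ∑ m, g m = 1 := h
  have hne : ∃ n, g n ≠ 0 := by
    by_contra hc
    push_neg at hc
    rw [Finset.sum_eq_zero (fun m _ => hc m)] at hs
    exact one_ne_zero hs.symm
  obtain ⟨n, hn⟩ := hne
  have hle : g n ≤ 1 := hs ▸ Finset.single_le_sum (f := g) (fun m _ => Nat.zero_le _) (mem_univ n)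
  have hgn : g n = 1 := by omega
  refine ⟨n, hgn, ?_⟩
  intro m hm
  have h0 : ∑ m' ∈ univ.erase n, g m' = 0 := by
    have h1 := Finset.add_sum_erase univ g (mem_univ n)
    omega
  have hm0 : g m = 0 := by
    have hm' : m ∈ univ.erase n := Finset.mem_erase.2 ⟨hm, mem_univ m⟩
    exact (Finset.sum_eq_zero_iff).1 h0 m hm'
  have : (j m : ℤ) = (j' m : ℤ) := by simp only [hg] at hm0; omega
  exact Fin.ext (by exact_mod_cast this)

lemma card_nbhd_le {d L : ℕ} (hd : 0 < d) (j : Site d L) :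
    ((univ : Finset (Site d L)).filter (fun j' => dLam j j' = 1)).card ≤ 2 * d := by
  classical
  have hcard : ((univ : Finset (Site d L)).filter (fun j' => dLam j j' = 1)).card ≤
      Fintype.card (Fin d × Bool) := by
    rw [← Finset.card_univ]
    apply Finset.card_le_card_of_injOn
      (fun j' => if h : dLam j j' = 1 then
        ((exists_uniq j j' h).choose,
          decide ((j ((exists_uniq j j' h).choose) : ℤ) < (j' ((exists_uniq j j' h).choose) : ℤ)))
        else (⟨0, hd⟩, false))
    · intro a _; exact mem_univ _
    · intro a ha b hb hfab
      have h1 : dLam j a = 1 := (Finset.mem_filter.1 (Finset.mem_coe.1 ha)).2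
      have h2 : dLam j b = 1 := (Finset.mem_filter.1 (Finset.mem_coe.1 hb)).2
      simp only [dif_pos h1, dif_pos h2, Prod.mk.injEq] at hfab
      obtain ⟨hn, hbool⟩ := hfab
      obtain ⟨ha1, ha2⟩ := (exists_uniq j a h1).choose_spec
      obtain ⟨hb1', hb2⟩ := (exists_uniq j b h2).choose_spec
      set n := (exists_uniq j a h1).choose with hndef
      rw [← hn] at hb1' hb2 hbool
      funext m
      by_cases hm : m = n
      · subst hm
        have hiff : ((j n : ℤ) < (a n : ℤ)) ↔ ((j n : ℤ) < (b n : ℤ)) := by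
          simpa [decide_eq_decide] using hbool
        have hab : (a n : ℤ) = (b n : ℤ) := by omega
        exact Fin.ext (by exact_mod_cast hab)
      · rw [← ha2 m hm, ← hb2 m hm]
  calc _ ≤ Fintype.card (Fin d × Bool) := hcard
    _ = 2 * d := by simp [Fintype.card_prod, mul_comm]

theorem zhang_avalanche_no_adjacent_overcritical
    (d L : ℕ) (hd : 0 < d) (hL : 0 < L)
    (Ec ε : ℝ) (hEc : 0 < Ec) (hε0 : 0 < ε) (hε1 : ε < 1)
    (hE : ε / (1 - ε) ≤ Ec)
    (x : Site d L → ℝ) (hx : ∀ i, 0 ≤ x i) (hxM : ∀ i, x i ≤ Ec)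
    (i : Site d L) :
    let y : Site d L → ℝ := fun j => x j + if j = i then 1 else 0
    (∀ n j, (zhangF d L Ec ε)^[n] y j ≤ max (Ec / ε) (Ec + 1)) ∧
      (∀ n j k, Ec < (zhangF d L Ec ε)^[n] y j → Ec < (zhangF d L Ec ε)^[n] y k →
        Even (dLam j k)) ∧
      (∀ n j k, Ec < (zhangF d L Ec ε)^[n] y j → Ec < (zhangF d L Ec ε)^[n] y k →
        dLam j k ≠ 1) := by
  intro y
  have hy : ∀ j, y j = x j + if j = i then 1 else 0 := fun _ => rfl
  have h1ε : (0:ℝ) < 1 - ε := by linarith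
  have hεle : ε ≤ Ec * (1 - ε) := (div_le_iff₀ h1ε).mp hE
  have hB1 : Ec + 1 ≤ Ec / ε := by
    rw [le_div_iff₀ hε0]; nlinarith
  have hEcB : Ec ≤ Ec / ε := by
    rw [le_div_iff₀ hε0]; nlinarith
  have hB0 : (0:ℝ) ≤ Ec / ε := le_trans hEc.le hEcB
  have hεB : ε * (Ec / ε) = Ec := by field_simp
  have hdR : (0:ℝ) < (d:ℝ) := by exact_mod_cast hd
  have hflip : ∀ a b : ZMod 2, a ≠ b → a = b + 1 := by decide
  have hnepar : ∀ j k : Site d L, dLam j k = 1 → par j ≠ par k := by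
    intro j k hk hp
    have heven : Even (dLam j k) := (even_dLam_iff j k).2 hp
    rw [hk] at heven
    simp at heven
  have key : ∀ n : ℕ, ∀ j, 0 ≤ (zhangF d L Ec ε)^[n] y j ∧
      (zhangF d L Ec ε)^[n] y j ≤ Ec / ε ∧
      (Ec < (zhangF d L Ec ε)^[n] y j → par j = par i + (n : ZMod 2)) := by
    intro n
    induction n with
    | zero =>
      intro j
      simp only [Function.iterate_zero, id_eq]
      refine ⟨?_, ?_, ?_⟩
      · rw [hy j]; split_ifs <;> linarith [hx j]
      · rw [hy j]; split_ifs <;> linarith [hxM j]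
      · intro hover
        rw [hy j] at hover
        by_cases h : j = i
        · rw [h]; simp
        · rw [if_neg h] at hover; linarith [hxM j]
    | succ n ih =>
      have hw0 : ∀ k, 0 ≤ (zhangF d L Ec ε)^[n] y k := fun k => (ih k).1
      have hwB : ∀ k, (zhangF d L Ec ε)^[n] y k ≤ Ec / ε := fun k => (ih k).2.1
      have hwp : ∀ k, Ec < (zhangF d L Ec ε)^[n] y k → par k = par i + (n : ZMod 2) :=
        fun k => (ih k).2.2
      intro j
      rw [Function.iterate_succ_apply']
      set w := (zhangF d L Ec ε)^[n] y with hwdef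
      simp only [zhangF]
      set c := (1 - ε) / (2 * (d:ℝ)) with hc
      set T := ∑ j' ∈ univ.filter (fun j' => dLam j j' = 1), theta (w j' - Ec) * w j' with hT
      have hθ01 : ∀ a : ℝ, 0 ≤ theta a ∧ theta a ≤ 1 := by
        intro a; unfold theta; split <;> norm_num
      have hc0 : 0 ≤ c := div_nonneg h1ε.le (by linarith)
      have hT0 : 0 ≤ T := Finset.sum_nonneg fun k _ => mul_nonneg (hθ01 _).1 (hw0 k)
      have hTle : T ≤ (2 * d) * (Ec / ε) := by
        calc T ≤ ∑ j' ∈ univ.filter (fun j' => dLam j j' = 1), (Ec / ε) := by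
              apply Finset.sum_le_sum
              intro k _
              calc theta (w k - Ec) * w k ≤ 1 * w k :=
                    mul_le_mul_of_nonneg_right (hθ01 _).2 (hw0 k)
                _ = w k := one_mul _
                _ ≤ Ec / ε := hwB k
          _ = ((univ.filter (fun j' => dLam j j' = 1)).card : ℝ) * (Ec / ε) := by
              rw [Finset.sum_const, nsmul_eq_mul]
          _ ≤ (2 * d) * (Ec / ε) := by
              apply mul_le_mul_of_nonneg_right _ hB0
              exact_mod_cast card_nbhd_le hd j
      have hTmul : c * T ≤ (1 - ε) * (Ec / ε) := by
        calc c * T ≤ c * ((2 * d) * (Ec / ε)) := mul_le_mul_of_nonneg_left hTle hc0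
          _ = (1 - ε) * (Ec / ε) := by rw [hc]; field_simp
      by_cases hcase : Ec < w j
      · -- overcritical site: it relaxes, and no neighbor is overcritical
        have hpj : par j = par i + (n : ZMod 2) := hwp j hcase
        have hTzero : T = 0 := by
          rw [hT]
          apply Finset.sum_eq_zero
          intro k hk
          have hdk : dLam j k = 1 := (Finset.mem_filter.1 hk).2
          by_cases hko : Ec < w k
          · exfalso
            have := hnepar j k hdk
            rw [hpj, hwp k hko] at this
            exact this rfl
          · have : theta (w k - Ec) = 0 := by
              unfold theta; rw [if_neg (by push_neg at hko; linarith)]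
            rw [this, zero_mul]
        have hθ1 : theta (w j - Ec) = 1 := by
          unfold theta; rw [if_pos (by linarith)]
        have hval : w j - theta (w j - Ec) * (1 - ε) * w j + c * T = ε * w j := by
          rw [hθ1, hTzero]; ring
        rw [hval]
        have hub : ε * w j ≤ Ec := by
          rw [← hεB]; exact mul_le_mul_of_nonneg_left (hwB j) hε0.le
        refine ⟨mul_nonneg hε0.le (hw0 j), by linarith, ?_⟩
        intro habs; exfalso; linarith
      · -- subcritical site
        push_neg at hcase
        have hθ0 : theta (w j - Ec) = 0 := by
          unfold theta; rw [if_neg (by linarith)]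
        have hval : w j - theta (w j - Ec) * (1 - ε) * w j + c * T = w j + c * T := by
          rw [hθ0]; ring
        rw [hval]
        have hid : Ec + (1 - ε) * (Ec / ε) = Ec / ε := by field_simp; ring
        refine ⟨add_nonneg (hw0 j) (mul_nonneg hc0 hT0), by linarith, ?_⟩
        intro hover
        have hTne : T ≠ 0 := by
          intro h0; rw [h0, mul_zero, add_zero] at hover; linarith
        have hsne : ∑ j' ∈ univ.filter (fun j' => dLam j j' = 1),
            theta (w j' - Ec) * w j' ≠ 0 := by rw [← hT]; exact hTne
        obtain ⟨k, hk, hknz⟩ := Finset.exists_ne_zero_of_sum_ne_zero hsne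
        have hdk : dLam j k = 1 := (Finset.mem_filter.1 hk).2
        have hko : Ec < w k := by
          by_contra h
          push_neg at h
          apply hknz
          have : theta (w k - Ec) = 0 := by unfold theta; rw [if_neg (by linarith)]
          rw [this, zero_mul]
        have hpk := hwp k hko
        have hpj : par j = par k + 1 := hflip _ _ (hnepar j k hdk)
        rw [hpj, hpk]
        push_cast
        ring
  have hmax : max (Ec / ε) (Ec + 1) = Ec / ε := max_eq_left hB1
  refine ⟨?_, ?_, ?_⟩
  · intro n j; rw [hmax]; exact (key n j).2.1
  · intro n j k hj hk
    exact (even_dLam_iff j k).2 (by rw [(key n j).2.2 hj, (key n k).2.2 hk])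
  · intro n j k hj hk h1
    have heven := (even_dLam_iff j k).2 (by rw [(key n j).2.2 hj, (key n k).2.2 hk])
    rw [h1] at heven
    simp at heven
end

section
/- If E_c ≥ ε/(1−ε) with ε ∈ (0,1), then for every configuration x occurring during an avalanche, det S(x) = ε^{ρ(x)}, where ρ(x) is the number of overcritical sites of x. Consequently the linear part L_{ij} of each avalanche map satisfies det L_{ij} = ε^{s_{ij}}, where s_{ij} is the avalanche size (total number of overcritical-site events). -/
open Finset

open Matrix

/-- `ρ(x)`: the number of overcritical sites of the configuration `x`. -/
noncomputable def rhoCount (d L : ℕ) (Ec : ℝ) (x : Site d L → ℝ) : ℕ :=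
  (Finset.univ.filter (fun i : Site d L => Ec < x i)).card


lemma theta_of_pos {a : ℝ} (h : 0 < a) : theta a = 1 := if_pos h
lemma theta_of_nonpos {a : ℝ} (h : a ≤ 0) : theta a = 0 := if_neg (not_lt.2 h)

def zpar {d L : ℕ} (j : Site d L) : ZMod 2 := ∑ n, ((j n : ℤ) : ZMod 2)

lemma natAbs_cast_zmod2_s7 (z : ℤ) : ((z.natAbs : ℕ) : ZMod 2) = (z : ZMod 2) := by
  rcases Int.natAbs_eq z with h | h
  · conv_rhs => rw [h]
    rw [Int.cast_natCast]
  · conv_rhs => rw [h]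
    rw [Int.cast_neg, Int.cast_natCast]
    exact (CharTwo.neg_eq _).symm

lemma zpar_ne_of_adj {d L : ℕ} {k l : Site d L} (h : dLam k l = 1) : zpar k ≠ zpar l := by
  intro he
  have h2 : ((dLam k l : ℕ) : ZMod 2) = zpar k - zpar l := by
    rw [dLam, Nat.cast_sum]
    simp_rw [natAbs_cast_zmod2_s7, Int.cast_sub]
    rw [Finset.sum_sub_distrib]
    rfl
  rw [h, he, sub_self, Nat.cast_one] at h2
  exact absurd h2 (by decide)

lemma adj_structure {d L : ℕ} {j l : Site d L} (h : dLam j l = 1) :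
    ∃ n₀ : Fin d, ((l n₀ : ℤ) - (j n₀ : ℤ)).natAbs = 1 ∧ ∀ n, n ≠ n₀ → l n = j n := by
  set f : Fin d → ℕ := fun n => ((j n : ℤ) - (l n : ℤ)).natAbs with hf
  have h' : ∑ n, f n = 1 := h
  have hex : ∃ n₀, f n₀ ≠ 0 := by
    by_contra hc
    push_neg at hc
    rw [Finset.sum_eq_zero (fun n _ => hc n)] at h'
    exact one_ne_zero h'.symm
  obtain ⟨n₀, hn₀⟩ := hex
  have h1 : f n₀ ≤ 1 := h' ▸ Finset.single_le_sum (fun _ _ => Nat.zero_le _) (mem_univ n₀)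
  have hf1 : f n₀ = 1 := le_antisymm h1 (Nat.one_le_iff_ne_zero.2 hn₀)
  refine ⟨n₀, ?_, ?_⟩
  · rw [← Int.natAbs_neg, neg_sub]
    exact hf1
  · intro n hn
    have hrest : ∑ m ∈ univ.erase n₀, f m = 0 := by
      have hsplit := Finset.add_sum_erase univ f (mem_univ n₀)
      omega
    have hfn : f n = 0 := by
      have := (Finset.sum_eq_zero_iff).mp hrest n (mem_erase.2 ⟨hn, mem_univ n⟩)
      exact this
    have hz : (j n : ℤ) - (l n : ℤ) = 0 := Int.natAbs_eq_zero.mp hfn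
    have : ((l n : ℕ) : ℤ) = ((j n : ℕ) : ℤ) := by omega
    exact Fin.ext (by exact_mod_cast this)

lemma card_neighbors_le {d L : ℕ} (hd : 0 < d) (j : Site d L) :
    (univ.filter (fun l : Site d L => dLam j l = 1)).card ≤ 2 * d := by
  classical
  set f : Site d L → Fin d × Bool := fun l =>
    (if h : ∃ n, l n ≠ j n then h.choose else ⟨0, hd⟩,
      decide ((∑ n, (j n : ℤ)) < ∑ n, (l n : ℤ))) with hfdef
  have key : ∀ l ∈ univ.filter (fun l : Site d L => dLam j l = 1),
      ∃ n₀ : Fin d, ((l n₀ : ℤ) - (j n₀ : ℤ)).natAbs = 1 ∧ (∀ n, n ≠ n₀ → l n = j n)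
        ∧ (f l).1 = n₀
        ∧ ((f l).2 = true ↔ (l n₀ : ℤ) - (j n₀ : ℤ) = 1) := by
    intro l hl
    have hadj : dLam j l = 1 := (mem_filter.mp hl).2
    obtain ⟨n₀, habs, hoth⟩ := adj_structure hadj
    have hne : l n₀ ≠ j n₀ := by
      intro hc
      rw [hc, sub_self] at habs
      simp at habs
    have hex : ∃ n, l n ≠ j n := ⟨n₀, hne⟩
    have hch : hex.choose = n₀ := by
      by_contra hc
      exact hex.choose_spec (hoth _ hc)
    have hdelta : (l n₀ : ℤ) - (j n₀ : ℤ) = 1 ∨ (l n₀ : ℤ) - (j n₀ : ℤ) = -1 := by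
      rcases Int.natAbs_eq ((l n₀ : ℤ) - (j n₀ : ℤ)) with h1 | h1 <;> rw [habs] at h1 <;> omega
    have hsum : (∑ n, (l n : ℤ)) = (∑ n, (j n : ℤ)) + ((l n₀ : ℤ) - (j n₀ : ℤ)) := by
      have : (∑ n, ((l n : ℤ) - (j n : ℤ))) = (l n₀ : ℤ) - (j n₀ : ℤ) := by
        rw [Finset.sum_eq_single n₀]
        · intro n _ hn
          rw [hoth n hn, sub_self]
        · intro hn; exact absurd (mem_univ n₀) hn
      rw [Finset.sum_sub_distrib] at this
      linarith
    refine ⟨n₀, habs, hoth, by simp only [hfdef, dif_pos hex, hch], ?_⟩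
    simp only [hfdef, decide_eq_true_eq]
    constructor
    · intro hlt
      rcases hdelta with h1 | h1
      · exact h1
      · rw [hsum, h1] at hlt; omega
    · intro h1
      rw [hsum, h1]; omega
  calc (univ.filter (fun l : Site d L => dLam j l = 1)).card
      ≤ ((univ : Finset (Fin d)) ×ˢ (univ : Finset Bool)).card := by
        apply Finset.card_le_card_of_injOn f
        · intro l _; exact Finset.mem_product.2 ⟨mem_univ _, mem_univ _⟩
        · intro a ha b hb hab
          obtain ⟨na, haabs, haoth, hafst, hasnd⟩ := key a ha
          obtain ⟨nb, hbabs, hboth, hbfst, hbsnd⟩ := key b hb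
          have hn : na = nb := by rw [← hafst, ← hbfst, hab]
          subst hn
          have hsnd : (f a).2 = (f b).2 := by rw [hab]
          have hda : (a na : ℤ) - (j na : ℤ) = 1 ∨ (a na : ℤ) - (j na : ℤ) = -1 := by
            rcases Int.natAbs_eq ((a na : ℤ) - (j na : ℤ)) with h1 | h1 <;> rw [haabs] at h1 <;> omega
          have hdb : (b na : ℤ) - (j na : ℤ) = 1 ∨ (b na : ℤ) - (j na : ℤ) = -1 := by
            rcases Int.natAbs_eq ((b na : ℤ) - (j na : ℤ)) with h1 | h1 <;> rw [hbabs] at h1 <;> omega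
          have heq : (a na : ℤ) = (b na : ℤ) := by
            rcases hda with h1 | h1 <;> rcases hdb with h2 | h2
            · omega
            · exfalso
              have ha2 : (f a).2 = true := hasnd.mpr h1
              have hb2 : (f b).2 ≠ true := by
                intro hc; have := hbsnd.mp hc; omega
              rw [hsnd] at ha2; exact hb2 ha2
            · exfalso
              have hb2 : (f b).2 = true := hbsnd.mpr h2
              have ha2 : (f a).2 ≠ true := by
                intro hc; have := hasnd.mp hc; omega
              rw [← hsnd] at hb2; exact ha2 hb2
            · omega
          funext n
          by_cases hn : n = na
          · subst hn; exact Fin.ext (by exact_mod_cast heq)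
          · rw [haoth n hn, hboth n hn]
    _ = 2 * d := by simp [Finset.card_product, mul_comm]

lemma dLam_self {d L : ℕ} (j : Site d L) : dLam j j = 0 := by
  simp [dLam]

lemma det_Smat_of_indep (d L : ℕ) (Ec ε : ℝ) (y : Site d L → ℝ)
    (hind : ∀ k l : Site d L, dLam k l = 1 → Ec < y k → Ec < y l → False) :
    (Smat d L Ec ε y).det = ε ^ rhoCount d L Ec y := by
  classical
  set p : Site d L → Prop := fun j => Ec < y j with hp
  have hS_nonover : ∀ k l : Site d L, ¬ p l →
      Smat d L Ec ε y k l = if k = l then 1 else 0 := by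
    intro k l hl
    have hθ : theta (y l - Ec) = 0 := theta_of_nonpos (by simp only [hp, not_lt] at hl; linarith)
    by_cases hkl : k = l
    · subst hkl
      simp [Smat, Jmat, Qmat, Matrix.add_apply, Matrix.smul_apply, Matrix.diagonal_apply_eq,
        hθ, dLam_self]
    · simp [Smat, Jmat, Qmat, Matrix.add_apply, Matrix.smul_apply,
        Matrix.diagonal_apply_ne _ hkl, hθ, hkl]
  have hS_over_diag : ∀ l : Site d L, p l → Smat d L Ec ε y l l = ε := by
    intro l hl
    have hθ : theta (y l - Ec) = 1 := theta_of_pos (by simp only [hp] at hl; linarith)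
    simp only [Smat, Matrix.add_apply, Matrix.smul_apply, Jmat, Qmat, Matrix.diagonal_apply_eq,
      hθ, dLam_self, smul_eq_mul]
    norm_num
  have hS_over_off : ∀ k l : Site d L, p k → p l → k ≠ l → Smat d L Ec ε y k l = 0 := by
    intro k l hk hl hkl
    simp only [Smat, Matrix.add_apply, Matrix.smul_apply, Jmat, Qmat,
      Matrix.diagonal_apply_ne _ hkl, smul_eq_mul]
    rw [if_neg]
    · ring
    · intro hadj
      exact hind k l hadj hk hl
  rw [← Matrix.det_submatrix_equiv_self (Equiv.sumCompl p) (Smat d L Ec ε y)]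
  have hblock : (Smat d L Ec ε y).submatrix (Equiv.sumCompl p) (Equiv.sumCompl p)
      = Matrix.fromBlocks (Matrix.diagonal fun _ : {a // p a} => ε) 0
          (Matrix.of fun (k : {a // ¬ p a}) (l : {a // p a}) => Smat d L Ec ε y k.1 l.1) 1 := by
    ext a b
    rcases a with a | a <;> rcases b with b | b
    · by_cases hab : a = b
      · subst hab
        simp [Matrix.submatrix_apply, hS_over_diag a a.2]
      · have : (a : Site d L) ≠ b := fun hc => hab (Subtype.ext hc)
        simp [Matrix.submatrix_apply, hS_over_off a b a.2 b.2 this,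
          Matrix.diagonal_apply_ne _ hab]
    · have hne : (a : Site d L) ≠ b := by
        intro hc
        exact b.2 (hc ▸ a.2)
      simp [Matrix.submatrix_apply, hS_nonover a b b.2, hne]
    · simp [Matrix.submatrix_apply]
    · by_cases hab : a = b
      · subst hab
        simp [Matrix.submatrix_apply, hS_nonover a a (a.2), Matrix.one_apply]
      · have : (a : Site d L) ≠ b := fun hc => hab (Subtype.ext hc)
        simp [Matrix.submatrix_apply, hS_nonover a b b.2, this, Matrix.one_apply, hab]
  rw [hblock, Matrix.det_fromBlocks_zero₁₂, Matrix.det_one, Matrix.det_diagonal, mul_one,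
    Finset.prod_const]
  congr 1
  rw [Finset.card_univ, Fintype.card_subtype]
  simp [rhoCount, hp]

lemma zhang_step_invariant (d L : ℕ) (hd : 0 < d) (Ec ε : ℝ)
    (hEc : 0 < Ec) (hε0 : 0 < ε) (hε1 : ε < 1)
    (y : Site d L → ℝ) (c : ZMod 2)
    (h : ∀ j, 0 ≤ y j ∧ y j ≤ Ec / ε ∧ (Ec < y j → zpar j = c)) :
    ∀ j, 0 ≤ zhangF d L Ec ε y j ∧ zhangF d L Ec ε y j ≤ Ec / ε ∧
      (Ec < zhangF d L Ec ε y j → zpar j = c + 1) := by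
  intro j
  classical
  set N := univ.filter (fun l : Site d L => dLam j l = 1) with hN
  set Srec := ∑ l ∈ N, theta (y l - Ec) * y l with hSrec
  have hterm : ∀ l : Site d L, 0 ≤ theta (y l - Ec) * y l ∧ theta (y l - Ec) * y l ≤ Ec / ε := by
    intro l
    by_cases hl : Ec < y l
    · rw [theta_of_pos (by linarith), one_mul]
      exact ⟨(h l).1, (h l).2.1⟩
    · rw [theta_of_nonpos (by push_neg at hl; linarith), zero_mul]
      exact ⟨le_refl 0, div_nonneg hEc.le hε0.le⟩
  have hS0 : 0 ≤ Srec := Finset.sum_nonneg (fun l _ => (hterm l).1)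
  have hSle : Srec ≤ (2 * (d : ℝ)) * (Ec / ε) := by
    calc Srec ≤ N.card • (Ec / ε) :=
          Finset.sum_le_card_nsmul _ _ _ (fun l _ => (hterm l).2)
      _ = (N.card : ℝ) * (Ec / ε) := nsmul_eq_mul _ _
      _ ≤ (2 * (d : ℝ)) * (Ec / ε) := by
          apply mul_le_mul_of_nonneg_right _ (div_nonneg hEc.le hε0.le)
          exact_mod_cast card_neighbors_le hd j
  have hdpos : (0 : ℝ) < 2 * d := by positivity
  have hcoef : 0 ≤ (1 - ε) / (2 * (d : ℝ)) := div_nonneg (by linarith) hdpos.le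
  have hEcle : Ec ≤ Ec / ε := by
    rw [le_div_iff₀ hε0]
    nlinarith
  have hfz : zhangF d L Ec ε y j
      = y j - theta (y j - Ec) * (1 - ε) * y j + ((1 - ε) / (2 * (d : ℕ))) * Srec := rfl
  have hcast : ((2 : ℝ) * (d : ℕ)) = 2 * (d : ℝ) := by norm_num
  by_cases hj : Ec < y j
  · have hθ : theta (y j - Ec) = 1 := theta_of_pos (by linarith)
    have hSz : Srec = 0 := by
      apply Finset.sum_eq_zero
      intro l hl
      have hadj : dLam j l = 1 := (mem_filter.mp hl).2
      by_cases hover : Ec < y l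
      · exact absurd (((h j).2.2 hj).trans ((h l).2.2 hover).symm) (zpar_ne_of_adj hadj)
      · rw [theta_of_nonpos (by push_neg at hover; linarith), zero_mul]
    have hval : zhangF d L Ec ε y j = ε * y j := by
      rw [hfz, hθ, hSz]; ring
    have hub : ε * y j ≤ Ec := by
      have := (h j).2.1
      calc ε * y j ≤ ε * (Ec / ε) := by nlinarith
        _ = Ec := by field_simp
    refine ⟨by rw [hval]; nlinarith [(h j).1], by rw [hval]; linarith, ?_⟩
    intro hover
    rw [hval] at hover
    linarith
  · have hθ : theta (y j - Ec) = 0 := theta_of_nonpos (by push_neg at hj; linarith)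
    have hval : zhangF d L Ec ε y j = y j + ((1 - ε) / (2 * (d : ℝ))) * Srec := by
      rw [hfz, hθ, hcast]; ring
    have hyle : y j ≤ Ec := not_lt.mp hj
    refine ⟨?_, ?_, ?_⟩
    · rw [hval]
      nlinarith [(h j).1, mul_nonneg hcoef hS0]
    · rw [hval]
      have h1 : ((1 - ε) / (2 * (d : ℝ))) * Srec
          ≤ ((1 - ε) / (2 * (d : ℝ))) * ((2 * (d : ℝ)) * (Ec / ε)) :=
        mul_le_mul_of_nonneg_left hSle hcoef
      have h2 : ((1 - ε) / (2 * (d : ℝ))) * ((2 * (d : ℝ)) * (Ec / ε)) = (1 - ε) * (Ec / ε) := by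
        field_simp
      have h4 : Ec + (1 - ε) * (Ec / ε) = Ec / ε := by
        field_simp
        ring
      linarith
    · intro hover
      rw [hval] at hover
      have hSpos : 0 < Srec := by
        by_contra hc
        push_neg at hc
        have : ((1 - ε) / (2 * (d : ℝ))) * Srec ≤ 0 := mul_nonpos_of_nonneg_of_nonpos hcoef hc
        linarith
      have hexl : ∃ l ∈ N, theta (y l - Ec) * y l ≠ 0 :=
        Finset.exists_ne_zero_of_sum_ne_zero (by rw [← hSrec]; exact ne_of_gt hSpos)
      obtain ⟨l, hlN, hlne⟩ := hexl
      have hadj : dLam j l = 1 := (mem_filter.mp hlN).2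
      have hover_l : Ec < y l := by
        by_contra hc
        push_neg at hc
        rw [theta_of_nonpos (by linarith), zero_mul] at hlne
        exact hlne rfl
      have hlc : zpar l = c := (h l).2.2 hover_l
      have hne : zpar j ≠ c := fun hc => zpar_ne_of_adj hadj (hc.trans hlc.symm)
      have hkey : ∀ a b : ZMod 2, a ≠ b → a = b + 1 := by decide
      exact hkey _ _ hne

lemma zhang_iter_invariant (d L : ℕ) (hd : 0 < d) (Ec ε : ℝ)
    (hEc : 0 < Ec) (hε0 : 0 < ε) (hε1 : ε < 1) (hE : ε / (1 - ε) ≤ Ec)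
    (x : Site d L → ℝ) (hx : ∀ i, 0 ≤ x i) (hxM : ∀ i, x i ≤ Ec) (i : Site d L) :
    ∀ n j, 0 ≤ (zhangF d L Ec ε)^[n] (fun j => x j + if j = i then 1 else 0) j ∧
      (zhangF d L Ec ε)^[n] (fun j => x j + if j = i then 1 else 0) j ≤ Ec / ε ∧
      (Ec < (zhangF d L Ec ε)^[n] (fun j => x j + if j = i then 1 else 0) j →
        zpar j = zpar i + (n : ℕ)) := by
  have h1ε : (0 : ℝ) < 1 - ε := by linarith
  have hE' : ε ≤ Ec * (1 - ε) := (div_le_iff₀ h1ε).mp hE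
  have hEcle : Ec ≤ Ec / ε := by
    rw [le_div_iff₀ hε0]; nlinarith
  have hEc1 : Ec + 1 ≤ Ec / ε := by
    rw [le_div_iff₀ hε0]; nlinarith
  intro n
  induction n with
  | zero =>
    intro j
    simp only [Function.iterate_zero, id_eq]
    by_cases hj : j = i
    · subst hj
      refine ⟨by simp; linarith [hx j], by simp; linarith [hxM j], ?_⟩
      intro _
      simp
    · simp only [if_neg hj, add_zero]
      refine ⟨hx j, le_trans (hxM j) hEcle, ?_⟩
      intro hover
      exact absurd (hxM j) (not_le.mpr hover)
  | succ n ih =>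
    have step := zhang_step_invariant d L hd Ec ε hEc hε0 hε1
      ((zhangF d L Ec ε)^[n] (fun j => x j + if j = i then 1 else 0))
      (zpar i + (n : ℕ)) ih
    intro j
    rw [Function.iterate_succ_apply']
    refine ⟨(step j).1, (step j).2.1, ?_⟩
    intro hover
    rw [(step j).2.2 hover]
    push_cast
    ring

theorem zhang_det_S_eq_eps_pow
    (d L : ℕ) (hd : 0 < d) (hL : 0 < L)
    (Ec ε : ℝ) (hEc : 0 < Ec) (hε0 : 0 < ε) (hε1 : ε < 1)
    (hE : ε / (1 - ε) ≤ Ec)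
    (x : Site d L → ℝ) (hx : ∀ i, 0 ≤ x i) (hxM : ∀ i, x i ≤ Ec)
    (i : Site d L) :
    let y : Site d L → ℝ := fun j => x j + if j = i then 1 else 0
    (∀ n, ((Smat d L Ec ε ((zhangF d L Ec ε)^[n] y)).det
        = ε ^ rhoCount d L Ec ((zhangF d L Ec ε)^[n] y))) ∧
      (∀ τ : ℕ,
        (((List.range τ).map (fun t => Smat d L Ec ε ((zhangF d L Ec ε)^[t] y))).prod).det
          = ε ^ (∑ t ∈ Finset.range τ, rhoCount d L Ec ((zhangF d L Ec ε)^[t] y))) := by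
  intro y
  have hinv := zhang_iter_invariant d L hd Ec ε hEc hε0 hε1 hE x hx hxM i
  have part1 : ∀ n, ((Smat d L Ec ε ((zhangF d L Ec ε)^[n] y)).det
      = ε ^ rhoCount d L Ec ((zhangF d L Ec ε)^[n] y)) := by
    intro n
    apply det_Smat_of_indep
    intro k l hadj hk hl
    have hk' := (hinv n k).2.2 hk
    have hl' := (hinv n l).2.2 hl
    exact zpar_ne_of_adj hadj (hk'.trans hl'.symm)
  refine ⟨part1, ?_⟩
  intro τ
  induction τ with
  | zero => simp
  | succ t ih =>
    rw [List.range_succ, List.map_append, List.prod_append, List.map_singleton,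
      List.prod_singleton, Matrix.det_mul, ih, part1, Finset.sum_range_succ, pow_add]
end

section
/- Let (M, f₁, …, f_N) be an iterated function system of piecewise continuous, strictly contracting maps on a compact metric space, with attractor Y satisfying Y = f₁(Y) ∪ … ∪ f_N(Y). Suppose each f_i has the property that the covering number satisfies 𝔑(f_i(Y), δ) ≤ ϑ_i 𝔑(Y, δ/s_i⁺), where 0 < s_i⁺ < 1 is the Lipschitz constant of f_i and ϑ_i ≥ 1 is the multiplicity of its continuity partition on Y. Then the upper box dimension of Y is at most the unique solution β of Σ_{i=1}^N ϑ_i (s_i⁺)^β = 1. -/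
open Filter Finset

/-- `covN X δ`: the minimal cardinality of a cover of `X` by balls of radius `δ`. -/
noncomputable def covN {M : Type*} [MetricSpace M] (X : Set M) (δ : ℝ) : ℕ :=
  sInf {n : ℕ | ∃ s : Finset M, s.card = n ∧ X ⊆ ⋃ y ∈ s, Metric.ball y δ}

/-- Upper box dimension of a subset of a metric space. -/
noncomputable def upperBoxDim {M : Type*} [MetricSpace M] (X : Set M) : ℝ :=
  limsup (fun δ : ℝ => Real.log (covN X δ) / Real.log (1 / δ)) (nhdsWithin 0 (Set.Ioi 0))

lemma covN_le_card {M : Type*} [MetricSpace M] {X : Set M} {δ : ℝ} {t : Finset M}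
    (h : X ⊆ ⋃ y ∈ t, Metric.ball y δ) : covN X δ ≤ t.card :=
  Nat.sInf_le ⟨t, rfl, h⟩

lemma covN_spec {M : Type*} [MetricSpace M] [CompactSpace M] (X : Set M) {δ : ℝ} (hδ : 0 < δ) :
    ∃ t : Finset M, t.card = covN X δ ∧ X ⊆ ⋃ y ∈ t, Metric.ball y δ := by
  classical
  have hne : {n : ℕ | ∃ s : Finset M, s.card = n ∧ X ⊆ ⋃ y ∈ s, Metric.ball y δ}.Nonempty := by
    obtain ⟨t, htf, hts⟩ := Metric.totallyBounded_iff.mp (isCompact_univ (X := M)).totallyBounded δ hδ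
    refine ⟨htf.toFinset.card, htf.toFinset, rfl, (Set.subset_univ X).trans ?_⟩
    simpa [Set.Finite.mem_toFinset] using hts
  exact Nat.sInf_mem hne

lemma one_le_covN {M : Type*} [MetricSpace M] [CompactSpace M] {X : Set M} (hX : X.Nonempty)
    {δ : ℝ} (hδ : 0 < δ) : 1 ≤ covN X δ := by
  obtain ⟨t, htc, hts⟩ := covN_spec X hδ
  rw [← htc]
  rcases Nat.eq_zero_or_pos t.card with h0 | h1
  · exfalso
    obtain ⟨x, hx⟩ := hX
    have := hts hx
    simp [Finset.card_eq_zero.mp h0] at this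
  · exact h1

set_option maxHeartbeats 1000000 in
theorem ifs_upper_box_dim_le
    {M : Type*} [MetricSpace M] [CompactSpace M]
    (N : ℕ) (hN : 0 < N) (f : Fin N → M → M)
    (s : Fin N → ℝ) (hs0 : ∀ i, 0 < s i) (hs1 : ∀ i, s i < 1)
    (hLip : ∀ i x y, dist (f i x) (f i y) ≤ s i * dist x y)
    (ϑ : Fin N → ℕ) (hϑ : ∀ i, 1 ≤ ϑ i)
    (Y : Set M) (hYne : Y.Nonempty) (hYc : IsCompact Y)
    (hY : Y = ⋃ i, f i '' Y)
    (hcov : ∀ i, ∀ δ : ℝ, 0 < δ → covN (f i '' Y) δ ≤ ϑ i * covN Y (δ / s i))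
    (β : ℝ) (hβ : ∑ i, (ϑ i : ℝ) * s i ^ β = 1) :
    upperBoxDim Y ≤ β := by
  classical
  have i0 : Fin N := ⟨0, hN⟩
  -- β is nonnegative
  have hβ0 : 0 ≤ β := by
    by_contra hneg
    push_neg at hneg
    have h1 : (1:ℝ) < s i0 ^ β := by
      rw [Real.one_lt_rpow_iff_of_pos (hs0 i0)]
      exact Or.inr ⟨hs1 i0, hneg⟩
    have hterm : (1:ℝ) < (ϑ i0 : ℝ) * s i0 ^ β := by
      have h2 : (1:ℝ) ≤ (ϑ i0 : ℝ) := by exact_mod_cast hϑ i0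
      nlinarith [Real.rpow_pos_of_pos (hs0 i0) β]
    have hsum : (ϑ i0 : ℝ) * s i0 ^ β ≤ ∑ i, (ϑ i : ℝ) * s i ^ β := by
      refine Finset.single_le_sum (f := fun i => (ϑ i : ℝ) * s i ^ β)
        (fun i _ => mul_nonneg (Nat.cast_nonneg _) (Real.rpow_pos_of_pos (hs0 i) β).le)
        (Finset.mem_univ i0)
    linarith [hβ ▸ hsum]
  -- max and min contraction ratios
  set smax : ℝ := Finset.univ.sup' ⟨i0, Finset.mem_univ i0⟩ s with hsmax_def
  set smin : ℝ := Finset.univ.inf' ⟨i0, Finset.mem_univ i0⟩ s with hsmin_def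
  have hsmax1 : smax < 1 := (Finset.sup'_lt_iff _).mpr fun i _ => hs1 i
  have hsmax0 : 0 < smax := lt_of_lt_of_le (hs0 i0) (Finset.le_sup' s (Finset.mem_univ i0))
  have hle_smax : ∀ i, s i ≤ smax := fun i => Finset.le_sup' s (Finset.mem_univ i)
  have hsmin0 : 0 < smin := (Finset.lt_inf'_iff _).mpr fun i _ => hs0 i
  have hsmin_le : ∀ i, smin ≤ s i := fun i => Finset.inf'_le s (Finset.mem_univ i)
  have hsmin1 : smin < 1 := lt_of_le_of_lt (hsmin_le i0) (hs1 i0)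
  set δ₀ : ℝ := Metric.diam Y + 1 with hδ₀_def
  have hδ₀0 : 0 < δ₀ := by positivity
  have hδ₀diam : Metric.diam Y < δ₀ := by simp [hδ₀_def]
  set C : ℝ := max 1 ((δ₀ / smin) ^ β) with hC_def
  have hC1 : (1:ℝ) ≤ C := le_max_left _ _
  have hC0 : (0:ℝ) < C := lt_of_lt_of_le one_pos hC1
  have hCge : (δ₀ / smin) ^ β ≤ C := le_max_right _ _
  -- covering with one ball for large radius
  have hone : ∀ δ' : ℝ, δ₀ ≤ δ' → covN Y δ' ≤ 1 := by
    intro δ' hδ'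
    obtain ⟨y₀, hy₀⟩ := hYne
    have hcover : Y ⊆ ⋃ y ∈ ({y₀} : Finset M), Metric.ball y δ' := by
      intro x hx
      simp only [Finset.mem_singleton, Set.mem_iUnion, Metric.mem_ball]
      exact ⟨y₀, rfl, lt_of_le_of_lt (Metric.dist_le_diam_of_mem hYc.isBounded hx hy₀)
        (lt_of_lt_of_le hδ₀diam hδ')⟩
    simpa using covN_le_card hcover
  -- key: 1 ≤ C * δ'^(-β) whenever 0 < δ' ≤ δ₀/smin
  have hone_le : ∀ δ' : ℝ, 0 < δ' → δ' ≤ δ₀ / smin → (1:ℝ) ≤ C * δ' ^ (-β) := by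
    intro δ' hp hle
    have h1 : δ' ^ β ≤ (δ₀ / smin) ^ β := Real.rpow_le_rpow hp.le hle hβ0
    have h2 : δ' ^ β ≤ C := le_trans h1 hCge
    have h3 : (0:ℝ) < δ' ^ β := Real.rpow_pos_of_pos hp β
    rw [Real.rpow_neg hp.le, ← div_eq_mul_inv, le_div_iff₀ h3, one_mul]
    exact h2
  -- the subadditivity step
  have hsub : ∀ δ : ℝ, 0 < δ → covN Y δ ≤ ∑ i, ϑ i * covN Y (δ / s i) := by
    intro δ hδ
    have hsub1 : covN Y δ ≤ ∑ i, covN (f i '' Y) δ := by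
      choose t ht hcov' using fun i => covN_spec (f i '' Y) hδ
      have hcover : Y ⊆ ⋃ y ∈ Finset.univ.biUnion t, Metric.ball y δ := by
        intro x hx
        rw [hY] at hx
        obtain ⟨i, hi⟩ := Set.mem_iUnion.mp hx
        obtain ⟨y, hy, hxy⟩ := Set.mem_iUnion₂.mp (hcov' i hi)
        exact Set.mem_iUnion₂.mpr ⟨y, Finset.mem_biUnion.mpr ⟨i, Finset.mem_univ i, hy⟩, hxy⟩
      calc covN Y δ ≤ (Finset.univ.biUnion t).card := covN_le_card hcover
        _ ≤ ∑ i, (t i).card := Finset.card_biUnion_le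
        _ = ∑ i, covN (f i '' Y) δ := by simp [ht]
    exact le_trans hsub1 (Finset.sum_le_sum fun i _ => hcov i δ hδ)
  -- main induction
  have H : ∀ n : ℕ, ∀ δ : ℝ, 0 < δ → δ ≤ δ₀ → δ₀ * smax ^ n ≤ δ →
      (covN Y δ : ℝ) ≤ C * δ ^ (-β) := by
    intro n
    induction n with
    | zero =>
      intro δ hδ hδle hlow
      simp only [pow_zero, mul_one] at hlow
      have : δ = δ₀ := le_antisymm hδle hlow
      have h1 : (covN Y δ : ℝ) ≤ 1 := by exact_mod_cast hone δ hlow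
      refine le_trans h1 (hone_le δ hδ ?_)
      calc δ ≤ δ₀ := hδle
        _ ≤ δ₀ / smin := by
          rw [le_div_iff₀ hsmin0]
          nlinarith
    | succ n ih =>
      intro δ hδ hδle hlow
      by_cases hcase : δ₀ * smax ^ n ≤ δ
      · exact ih δ hδ hδle hcase
      push_neg at hcase
      -- each term bound
      have hterm : ∀ i : Fin N, (covN Y (δ / s i) : ℝ) ≤ C * s i ^ β * δ ^ (-β) := by
        intro i
        have hδ'pos : 0 < δ / s i := div_pos hδ (hs0 i)
        have hδ'lowmax : δ₀ * smax ^ n ≤ δ / s i := by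
          rw [le_div_iff₀ (hs0 i)]
          calc δ₀ * smax ^ n * s i ≤ δ₀ * smax ^ n * smax := by
                have : (0:ℝ) ≤ δ₀ * smax ^ n := by positivity
                nlinarith [hle_smax i]
            _ = δ₀ * smax ^ (n+1) := by ring
            _ ≤ δ := hlow
        have hsplit : (δ / s i) ^ (-β) = s i ^ β * δ ^ (-β) := by
          rw [Real.div_rpow hδ.le (hs0 i).le, Real.rpow_neg (hs0 i).le, div_eq_mul_inv,
            inv_inv, mul_comm]
        by_cases hc2 : δ / s i ≤ δ₀
        · have := ih (δ / s i) hδ'pos hc2 hδ'lowmax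
          calc (covN Y (δ / s i) : ℝ) ≤ C * (δ / s i) ^ (-β) := this
            _ = C * s i ^ β * δ ^ (-β) := by rw [hsplit, mul_assoc]
        · push_neg at hc2
          have h1 : (covN Y (δ / s i) : ℝ) ≤ 1 := by exact_mod_cast hone _ hc2.le
          have h2 : δ / s i ≤ δ₀ / smin :=
            div_le_div₀ hδ₀0.le hδle hsmin0 (hsmin_le i)
          calc (covN Y (δ / s i) : ℝ) ≤ 1 := h1
            _ ≤ C * (δ / s i) ^ (-β) := hone_le _ hδ'pos h2
            _ = C * s i ^ β * δ ^ (-β) := by rw [hsplit, mul_assoc]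
      have hcast : (covN Y δ : ℝ) ≤ ∑ i, (ϑ i : ℝ) * (covN Y (δ / s i) : ℝ) := by
        have := hsub δ hδ
        exact_mod_cast this
      calc (covN Y δ : ℝ) ≤ ∑ i, (ϑ i : ℝ) * (covN Y (δ / s i) : ℝ) := hcast
        _ ≤ ∑ i, (ϑ i : ℝ) * (C * s i ^ β * δ ^ (-β)) := by
            refine Finset.sum_le_sum fun i _ => ?_
            exact mul_le_mul_of_nonneg_left (hterm i) (by positivity)
        _ = (C * δ ^ (-β)) * ∑ i, (ϑ i : ℝ) * s i ^ β := by
            rw [Finset.mul_sum]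
            exact Finset.sum_congr rfl fun i _ => by ring
        _ = C * δ ^ (-β) := by rw [hβ, mul_one]
  -- global bound for small δ
  have hmain : ∀ δ : ℝ, 0 < δ → δ ≤ δ₀ → (covN Y δ : ℝ) ≤ C * δ ^ (-β) := by
    intro δ hδ hδle
    obtain ⟨n, hn⟩ := exists_pow_lt_of_lt_one (div_pos hδ hδ₀0) hsmax1
    refine H n δ hδ hδle ?_
    calc δ₀ * smax ^ n ≤ δ₀ * (δ / δ₀) := by nlinarith
      _ = δ := by field_simp
  -- passing to the limsup
  have hev : ∀ ε : ℝ, 0 < ε →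
      ∀ᶠ δ in nhdsWithin (0:ℝ) (Set.Ioi 0),
        Real.log (covN Y δ) / Real.log (1 / δ) ≤ β + ε := by
    intro ε hε
    have hlogC0 : 0 ≤ Real.log C := Real.log_nonneg hC1
    set r : ℝ := min δ₀ (Real.exp (-(Real.log C / ε) - 1)) with hr_def
    have hr0 : 0 < r := lt_min hδ₀0 (Real.exp_pos _)
    filter_upwards [Ioo_mem_nhdsGT_of_mem (Set.mem_Ico.mpr ⟨le_refl (0:ℝ), hr0⟩)]
      with δ hδ
    obtain ⟨hδ0, hδr⟩ := hδ
    have hδδ₀ : δ ≤ δ₀ := le_of_lt (lt_of_lt_of_le hδr (min_le_left _ _))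
    have hδexp : δ < Real.exp (-(Real.log C / ε) - 1) :=
      lt_of_lt_of_le hδr (min_le_right _ _)
    have hlogδ : Real.log δ < -(Real.log C / ε) - 1 :=
      (Real.log_lt_iff_lt_exp hδ0).mpr hδexp
    have hL : Real.log (1 / δ) = -Real.log δ := by rw [one_div, Real.log_inv]
    have hLgt : Real.log C / ε + 1 < Real.log (1 / δ) := by rw [hL]; linarith
    have hLpos : 0 < Real.log (1 / δ) := by
      have : (0:ℝ) ≤ Real.log C / ε := by positivity
      linarith
    have hcov1 : (1:ℝ) ≤ (covN Y δ : ℝ) := by exact_mod_cast one_le_covN hYne hδ0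
    have hcovpos : (0:ℝ) < (covN Y δ : ℝ) := lt_of_lt_of_le one_pos hcov1
    have hlogcov : Real.log (covN Y δ) ≤ Real.log C + β * Real.log (1 / δ) := by
      have h1 : Real.log (covN Y δ) ≤ Real.log (C * δ ^ (-β)) :=
        Real.log_le_log hcovpos (hmain δ hδ0 hδδ₀)
      have h2 : Real.log (C * δ ^ (-β)) = Real.log C + (-β) * Real.log δ := by
        rw [Real.log_mul hC0.ne' (Real.rpow_pos_of_pos hδ0 _).ne', Real.log_rpow hδ0]
      rw [h2] at h1
      rw [hL]
      linarith
    have hlogcov0 : 0 ≤ Real.log (covN Y δ) := Real.log_nonneg hcov1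
    have hstep : Real.log (covN Y δ) / Real.log (1 / δ) ≤
        (Real.log C + β * Real.log (1 / δ)) / Real.log (1 / δ) := by
      gcongr
    have heq : (Real.log C + β * Real.log (1 / δ)) / Real.log (1 / δ) =
        Real.log C / Real.log (1 / δ) + β := by
      rw [add_div, mul_div_assoc, div_self hLpos.ne', mul_one]
    have hfin : Real.log C / Real.log (1 / δ) ≤ ε := by
      rw [div_le_iff₀ hLpos]
      have hmul := mul_lt_mul_of_pos_left hLgt hε
      have hx : ε * (Real.log C / ε + 1) = Real.log C + ε := by field_simp
      nlinarith
    calc Real.log (covN Y δ) / Real.log (1 / δ)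
        ≤ (Real.log C + β * Real.log (1 / δ)) / Real.log (1 / δ) := hstep
      _ = Real.log C / Real.log (1 / δ) + β := heq
      _ ≤ β + ε := by linarith
  -- conclude
  have hcb : Filter.IsCoboundedUnder (· ≤ ·) (nhdsWithin (0:ℝ) (Set.Ioi 0))
      (fun δ : ℝ => Real.log (covN Y δ) / Real.log (1 / δ)) := by
    refine Filter.isCoboundedUnder_le_of_eventually_le (nhdsWithin (0:ℝ) (Set.Ioi 0)) (x := 0) ?_
    filter_upwards [Ioo_mem_nhdsGT_of_mem (Set.mem_Ico.mpr ⟨le_refl (0:ℝ), one_pos⟩)]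
      with δ hδ
    obtain ⟨hδ0, hδ1⟩ := hδ
    have h1 : (1:ℝ) ≤ (covN Y δ : ℝ) := by exact_mod_cast one_le_covN hYne hδ0
    have h2 : 0 < Real.log (1 / δ) := Real.log_pos (by rw [lt_div_iff₀ hδ0, one_mul]; exact hδ1)
    exact div_nonneg (Real.log_nonneg h1) h2.le
  refine le_of_forall_gt_imp_ge_of_dense fun b hb => ?_
  have hε : 0 < b - β := by linarith
  have := Filter.limsup_le_of_le hcb (a := b)
    (by filter_upwards [hev (b - β) hε] with δ h; linarith)
  simpa [upperBoxDim] using this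
end

section
/- Let A be the 6×6 0–1 matrix with rows (0,1,0,0,1,0), (0,0,1,0,0,1), (1,0,0,1,0,0), (0,0,1,0,0,1), (1,0,0,1,0,0), (0,1,0,0,1,0). Then A is irreducible (the associated directed graph is strongly connected), its spectrum is {−1, −1, 0, 0, 0, 2}, and hence the topological entropy of the associated topological Markov chain (Σ_A⁺, σ_A⁺) equals log 2. -/
open Matrix Polynomial Filter

/-- The transition matrix of the symbolic coding of the `N = 2` Zhang model
on its three-point attractor (Example A). -/
def Amat : Matrix (Fin 6) (Fin 6) ℝ :=
  !![0,1,0,0,1,0;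
     0,0,1,0,0,1;
     1,0,0,1,0,0;
     0,0,1,0,0,1;
     1,0,0,1,0,0;
     0,1,0,0,1,0]

@[simp] lemma cons_val_five' {α : Type*} {m : ℕ} (x : α) (u : Fin (m+5) → α) :
    vecCons x u 5 = vecHead (vecTail (vecTail (vecTail (vecTail u)))) := rfl
@[simp] lemma succ_two_eq_three {n : ℕ} : (2 : Fin (n+3)).succ = 3 := rfl
@[simp] lemma succ_three_eq_four {n : ℕ} : (3 : Fin (n+4)).succ = 4 := rfl
@[simp] lemma succ_four_eq_five {n : ℕ} : (4 : Fin (n+5)).succ = 5 := rfl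

@[simp] lemma sa4_1_1 : Fin.succAbove (1 : Fin 4) (1 : Fin 3) = 2 := by decide
@[simp] lemma sa4_1_2 : Fin.succAbove (1 : Fin 4) (2 : Fin 3) = 3 := by decide
@[simp] lemma sa4_2_1 : Fin.succAbove (2 : Fin 4) (1 : Fin 3) = 1 := by decide
@[simp] lemma sa4_2_2 : Fin.succAbove (2 : Fin 4) (2 : Fin 3) = 3 := by decide
@[simp] lemma sa4_3_1 : Fin.succAbove (3 : Fin 4) (1 : Fin 3) = 1 := by decide
@[simp] lemma sa4_3_2 : Fin.succAbove (3 : Fin 4) (2 : Fin 3) = 2 := by decide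
@[simp] lemma sa5_1_1 : Fin.succAbove (1 : Fin 5) (1 : Fin 4) = 2 := by decide
@[simp] lemma sa5_1_2 : Fin.succAbove (1 : Fin 5) (2 : Fin 4) = 3 := by decide
@[simp] lemma sa5_1_3 : Fin.succAbove (1 : Fin 5) (3 : Fin 4) = 4 := by decide
@[simp] lemma sa5_2_1 : Fin.succAbove (2 : Fin 5) (1 : Fin 4) = 1 := by decide
@[simp] lemma sa5_2_2 : Fin.succAbove (2 : Fin 5) (2 : Fin 4) = 3 := by decide
@[simp] lemma sa5_2_3 : Fin.succAbove (2 : Fin 5) (3 : Fin 4) = 4 := by decide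
@[simp] lemma sa5_3_1 : Fin.succAbove (3 : Fin 5) (1 : Fin 4) = 1 := by decide
@[simp] lemma sa5_3_2 : Fin.succAbove (3 : Fin 5) (2 : Fin 4) = 2 := by decide
@[simp] lemma sa5_3_3 : Fin.succAbove (3 : Fin 5) (3 : Fin 4) = 4 := by decide
@[simp] lemma sa5_4_1 : Fin.succAbove (4 : Fin 5) (1 : Fin 4) = 1 := by decide
@[simp] lemma sa5_4_2 : Fin.succAbove (4 : Fin 5) (2 : Fin 4) = 2 := by decide
@[simp] lemma sa5_4_3 : Fin.succAbove (4 : Fin 5) (3 : Fin 4) = 3 := by decide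
@[simp] lemma sa6_1_1 : Fin.succAbove (1 : Fin 6) (1 : Fin 5) = 2 := by decide
@[simp] lemma sa6_1_2 : Fin.succAbove (1 : Fin 6) (2 : Fin 5) = 3 := by decide
@[simp] lemma sa6_1_3 : Fin.succAbove (1 : Fin 6) (3 : Fin 5) = 4 := by decide
@[simp] lemma sa6_1_4 : Fin.succAbove (1 : Fin 6) (4 : Fin 5) = 5 := by decide
@[simp] lemma sa6_2_1 : Fin.succAbove (2 : Fin 6) (1 : Fin 5) = 1 := by decide
@[simp] lemma sa6_2_2 : Fin.succAbove (2 : Fin 6) (2 : Fin 5) = 3 := by decide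
@[simp] lemma sa6_2_3 : Fin.succAbove (2 : Fin 6) (3 : Fin 5) = 4 := by decide
@[simp] lemma sa6_2_4 : Fin.succAbove (2 : Fin 6) (4 : Fin 5) = 5 := by decide
@[simp] lemma sa6_3_1 : Fin.succAbove (3 : Fin 6) (1 : Fin 5) = 1 := by decide
@[simp] lemma sa6_3_2 : Fin.succAbove (3 : Fin 6) (2 : Fin 5) = 2 := by decide
@[simp] lemma sa6_3_3 : Fin.succAbove (3 : Fin 6) (3 : Fin 5) = 4 := by decide
@[simp] lemma sa6_3_4 : Fin.succAbove (3 : Fin 6) (4 : Fin 5) = 5 := by decide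
@[simp] lemma sa6_4_1 : Fin.succAbove (4 : Fin 6) (1 : Fin 5) = 1 := by decide
@[simp] lemma sa6_4_2 : Fin.succAbove (4 : Fin 6) (2 : Fin 5) = 2 := by decide
@[simp] lemma sa6_4_3 : Fin.succAbove (4 : Fin 6) (3 : Fin 5) = 3 := by decide
@[simp] lemma sa6_4_4 : Fin.succAbove (4 : Fin 6) (4 : Fin 5) = 5 := by decide
@[simp] lemma sa6_5_1 : Fin.succAbove (5 : Fin 6) (1 : Fin 5) = 1 := by decide
@[simp] lemma sa6_5_2 : Fin.succAbove (5 : Fin 6) (2 : Fin 5) = 2 := by decide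
@[simp] lemma sa6_5_3 : Fin.succAbove (5 : Fin 6) (3 : Fin 5) = 3 := by decide
@[simp] lemma sa6_5_4 : Fin.succAbove (5 : Fin 6) (4 : Fin 5) = 4 := by decide
section Dets
variable {R : Type*} [CommRing R]

theorem det_fin_four (A : Matrix (Fin 4) (Fin 4) R) :
    det A =
      A 0 0 * (A 1 1 * A 2 2 * A 3 3 - A 1 1 * A 2 3 * A 3 2 - A 1 2 * A 2 1 * A 3 3
        + A 1 2 * A 2 3 * A 3 1 + A 1 3 * A 2 1 * A 3 2 - A 1 3 * A 2 2 * A 3 1)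
      - A 0 1 * (A 1 0 * A 2 2 * A 3 3 - A 1 0 * A 2 3 * A 3 2 - A 1 2 * A 2 0 * A 3 3
        + A 1 2 * A 2 3 * A 3 0 + A 1 3 * A 2 0 * A 3 2 - A 1 3 * A 2 2 * A 3 0)
      + A 0 2 * (A 1 0 * A 2 1 * A 3 3 - A 1 0 * A 2 3 * A 3 1 - A 1 1 * A 2 0 * A 3 3
        + A 1 1 * A 2 3 * A 3 0 + A 1 3 * A 2 0 * A 3 1 - A 1 3 * A 2 1 * A 3 0)
      - A 0 3 * (A 1 0 * A 2 1 * A 3 2 - A 1 0 * A 2 2 * A 3 1 - A 1 1 * A 2 0 * A 3 2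
        + A 1 1 * A 2 2 * A 3 0 + A 1 2 * A 2 0 * A 3 1 - A 1 2 * A 2 1 * A 3 0) := by
  rw [Matrix.det_succ_row_zero]
  simp only [Fin.sum_univ_succ, Finset.univ_unique,
    Finset.sum_singleton, Fin.default_eq_zero, Matrix.submatrix_apply, Matrix.of_apply,
    Fin.succ_succAbove_succ,
    Fin.zero_succAbove, Fin.succ_succAbove_zero, Matrix.det_fin_three,
    Fin.succ_zero_eq_one, Fin.succ_one_eq_two, succ_two_eq_three, succ_three_eq_four,
    succ_four_eq_five, sa4_1_1, sa4_1_2, sa4_2_1, sa4_2_2, sa4_3_1, sa4_3_2, sa5_1_1, sa5_1_2, sa5_1_3, sa5_2_1, sa5_2_2, sa5_2_3, sa5_3_1, sa5_3_2, sa5_3_3, sa5_4_1, sa5_4_2, sa5_4_3, sa6_1_1, sa6_1_2, sa6_1_3, sa6_1_4, sa6_2_1, sa6_2_2, sa6_2_3, sa6_2_4, sa6_3_1, sa6_3_2, sa6_3_3, sa6_3_4, sa6_4_1, sa6_4_2, sa6_4_3, sa6_4_4, sa6_5_1, sa6_5_2, sa6_5_3, sa6_5_4,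
    Matrix.cons_val_zero, Matrix.cons_val_one, Matrix.cons_val_two, Matrix.cons_val_three,
    Matrix.cons_val_four, cons_val_five', Matrix.head_cons, Matrix.vecHead, Matrix.vecTail,
    Function.comp_apply, Matrix.cons_val', Matrix.empty_val', Matrix.cons_val_fin_one,
    Matrix.head_fin_const, Fin.val_zero, Fin.val_succ, Fin.val_one, pow_succ, pow_zero,
    mul_zero, zero_mul, mul_one, one_mul, mul_neg, neg_mul, neg_neg, add_zero, zero_add,
    sub_zero, zero_sub, neg_zero]
  ring

set_option maxHeartbeats 2000000 in
set_option maxRecDepth 40000 in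
lemma det_M0 : det (!![X,-1,0,0,-1; 0,X,-1,0,0; 0,-1,X,0,-1; 0,0,-1,X,0; -1,0,0,-1,X] :
    Matrix (Fin 5) (Fin 5) (Polynomial R)) = X^5 - 2*X^3 - X^2 := by
  rw [Matrix.det_succ_row_zero]
  simp only [Fin.sum_univ_succ, Finset.univ_unique,
    Finset.sum_singleton, Fin.default_eq_zero, Matrix.submatrix_apply, Matrix.of_apply,
    Fin.succ_succAbove_succ,
    Fin.zero_succAbove, Fin.succ_succAbove_zero, Matrix.det_fin_three, det_fin_four,
    Fin.succ_zero_eq_one, Fin.succ_one_eq_two, succ_two_eq_three, succ_three_eq_four,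
    succ_four_eq_five, sa4_1_1, sa4_1_2, sa4_2_1, sa4_2_2, sa4_3_1, sa4_3_2, sa5_1_1, sa5_1_2, sa5_1_3, sa5_2_1, sa5_2_2, sa5_2_3, sa5_3_1, sa5_3_2, sa5_3_3, sa5_4_1, sa5_4_2, sa5_4_3, sa6_1_1, sa6_1_2, sa6_1_3, sa6_1_4, sa6_2_1, sa6_2_2, sa6_2_3, sa6_2_4, sa6_3_1, sa6_3_2, sa6_3_3, sa6_3_4, sa6_4_1, sa6_4_2, sa6_4_3, sa6_4_4, sa6_5_1, sa6_5_2, sa6_5_3, sa6_5_4,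
    Matrix.cons_val_zero, Matrix.cons_val_one, Matrix.cons_val_two, Matrix.cons_val_three,
    Matrix.cons_val_four, cons_val_five', Matrix.head_cons, Matrix.vecHead, Matrix.vecTail,
    Function.comp_apply, Matrix.cons_val', Matrix.empty_val', Matrix.cons_val_fin_one,
    Matrix.head_fin_const, Fin.val_zero, Fin.val_succ, Fin.val_one, pow_succ, pow_zero,
    mul_zero, zero_mul, mul_one, one_mul, mul_neg, neg_mul, neg_neg, add_zero, zero_add,
    sub_zero, zero_sub, neg_zero]
  ring

set_option maxHeartbeats 2000000 in
set_option maxRecDepth 40000 in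
lemma det_M1 : det (!![0,-1,0,0,-1; -1,X,-1,0,0; 0,-1,X,0,-1; -1,0,-1,X,0; 0,0,0,-1,X] :
    Matrix (Fin 5) (Fin 5) (Polynomial R)) = -X^3 - X^2 := by
  rw [Matrix.det_succ_row_zero]
  simp only [Fin.sum_univ_succ, Finset.univ_unique,
    Finset.sum_singleton, Fin.default_eq_zero, Matrix.submatrix_apply, Matrix.of_apply,
    Fin.succ_succAbove_succ,
    Fin.zero_succAbove, Fin.succ_succAbove_zero, Matrix.det_fin_three, det_fin_four,
    Fin.succ_zero_eq_one, Fin.succ_one_eq_two, succ_two_eq_three, succ_three_eq_four,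
    succ_four_eq_five, sa4_1_1, sa4_1_2, sa4_2_1, sa4_2_2, sa4_3_1, sa4_3_2, sa5_1_1, sa5_1_2, sa5_1_3, sa5_2_1, sa5_2_2, sa5_2_3, sa5_3_1, sa5_3_2, sa5_3_3, sa5_4_1, sa5_4_2, sa5_4_3, sa6_1_1, sa6_1_2, sa6_1_3, sa6_1_4, sa6_2_1, sa6_2_2, sa6_2_3, sa6_2_4, sa6_3_1, sa6_3_2, sa6_3_3, sa6_3_4, sa6_4_1, sa6_4_2, sa6_4_3, sa6_4_4, sa6_5_1, sa6_5_2, sa6_5_3, sa6_5_4,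
    Matrix.cons_val_zero, Matrix.cons_val_one, Matrix.cons_val_two, Matrix.cons_val_three,
    Matrix.cons_val_four, cons_val_five', Matrix.head_cons, Matrix.vecHead, Matrix.vecTail,
    Function.comp_apply, Matrix.cons_val', Matrix.empty_val', Matrix.cons_val_fin_one,
    Matrix.head_fin_const, Fin.val_zero, Fin.val_succ, Fin.val_one, pow_succ, pow_zero,
    mul_zero, zero_mul, mul_one, one_mul, mul_neg, neg_mul, neg_neg, add_zero, zero_add,
    sub_zero, zero_sub, neg_zero]
  ring

set_option maxHeartbeats 2000000 in
set_option maxRecDepth 40000 in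
lemma det_M4 : det (!![0,X,-1,0,-1; -1,0,X,-1,0; 0,0,-1,X,-1; -1,0,0,-1,0; 0,-1,0,0,X] :
    Matrix (Fin 5) (Fin 5) (Polynomial R)) = X^4 - X^2 := by
  rw [Matrix.det_succ_row_zero]
  simp only [Fin.sum_univ_succ, Finset.univ_unique,
    Finset.sum_singleton, Fin.default_eq_zero, Matrix.submatrix_apply, Matrix.of_apply,
    Fin.succ_succAbove_succ,
    Fin.zero_succAbove, Fin.succ_succAbove_zero, Matrix.det_fin_three, det_fin_four,
    Fin.succ_zero_eq_one, Fin.succ_one_eq_two, succ_two_eq_three, succ_three_eq_four,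
    succ_four_eq_five, sa4_1_1, sa4_1_2, sa4_2_1, sa4_2_2, sa4_3_1, sa4_3_2, sa5_1_1, sa5_1_2, sa5_1_3, sa5_2_1, sa5_2_2, sa5_2_3, sa5_3_1, sa5_3_2, sa5_3_3, sa5_4_1, sa5_4_2, sa5_4_3, sa6_1_1, sa6_1_2, sa6_1_3, sa6_1_4, sa6_2_1, sa6_2_2, sa6_2_3, sa6_2_4, sa6_3_1, sa6_3_2, sa6_3_3, sa6_3_4, sa6_4_1, sa6_4_2, sa6_4_3, sa6_4_4, sa6_5_1, sa6_5_2, sa6_5_3, sa6_5_4,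
    Matrix.cons_val_zero, Matrix.cons_val_one, Matrix.cons_val_two, Matrix.cons_val_three,
    Matrix.cons_val_four, cons_val_five', Matrix.head_cons, Matrix.vecHead, Matrix.vecTail,
    Function.comp_apply, Matrix.cons_val', Matrix.empty_val', Matrix.cons_val_fin_one,
    Matrix.head_fin_const, Fin.val_zero, Fin.val_succ, Fin.val_one, pow_succ, pow_zero,
    mul_zero, zero_mul, mul_one, one_mul, mul_neg, neg_mul, neg_neg, add_zero, zero_add,
    sub_zero, zero_sub, neg_zero]
  ring

end Dets

set_option maxHeartbeats 1000000 in
set_option maxRecDepth 40000 in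
lemma Amat_charpoly : Amat.charpoly = (X - C 2) * (X + C 1) ^ 2 * X ^ 3 := by
  have h : Amat.charpoly = (charmatrix Amat).det := rfl
  have hc : charmatrix Amat =
      !![X, -1, 0, 0, -1, 0;
         0, X, -1, 0, 0, -1;
         -1, 0, X, -1, 0, 0;
         0, 0, -1, X, 0, -1;
         -1, 0, 0, -1, X, 0;
         0, -1, 0, 0, -1, X] := by
    ext i j
    fin_cases i <;> fin_cases j <;>
      simp [charmatrix_apply, Amat, Matrix.vecHead, Matrix.vecTail, Matrix.one_apply] <;> norm_num
  have e0 : ((!![X, -1, 0, 0, -1, 0;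
         0, X, -1, 0, 0, -1;
         -1, 0, X, -1, 0, 0;
         0, 0, -1, X, 0, -1;
         -1, 0, 0, -1, X, 0;
         0, -1, 0, 0, -1, X] : Matrix (Fin 6) (Fin 6) (Polynomial ℝ)).submatrix Fin.succ
        (Fin.succAbove 0)) =
      !![X,-1,0,0,-1; 0,X,-1,0,0; 0,-1,X,0,-1; 0,0,-1,X,0; -1,0,0,-1,X] := by
    ext i j; fin_cases i <;> fin_cases j <;> rfl
  have e1 : ((!![X, -1, 0, 0, -1, 0;
         0, X, -1, 0, 0, -1;
         -1, 0, X, -1, 0, 0;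
         0, 0, -1, X, 0, -1;
         -1, 0, 0, -1, X, 0;
         0, -1, 0, 0, -1, X] : Matrix (Fin 6) (Fin 6) (Polynomial ℝ)).submatrix Fin.succ
        (Fin.succAbove 1)) =
      !![0,-1,0,0,-1; -1,X,-1,0,0; 0,-1,X,0,-1; -1,0,-1,X,0; 0,0,0,-1,X] := by
    ext i j; fin_cases i <;> fin_cases j <;> rfl
  have e4 : ((!![X, -1, 0, 0, -1, 0;
         0, X, -1, 0, 0, -1;
         -1, 0, X, -1, 0, 0;
         0, 0, -1, X, 0, -1;
         -1, 0, 0, -1, X, 0;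
         0, -1, 0, 0, -1, X] : Matrix (Fin 6) (Fin 6) (Polynomial ℝ)).submatrix Fin.succ
        (Fin.succAbove 4)) =
      !![0,X,-1,0,-1; -1,0,X,-1,0; 0,0,-1,X,-1; -1,0,0,-1,0; 0,-1,0,0,X] := by
    ext i j; fin_cases i <;> fin_cases j <;> rfl
  rw [h, hc, Matrix.det_succ_row_zero, Fin.sum_univ_six, e0, e1, e4, det_M0, det_M1, det_M4]
  simp only [Matrix.of_apply, Matrix.cons_val_zero, Matrix.cons_val_one, Matrix.cons_val_two,
    Matrix.cons_val_three, Matrix.cons_val_four, cons_val_five', Matrix.head_cons,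
    Matrix.vecHead, Matrix.vecTail, Function.comp_apply, Fin.val_zero, Fin.val_one,
    Fin.val_succ, mul_zero, zero_mul, add_zero, zero_add, Matrix.cons_val]
  have h4 : ((4 : Fin 6) : ℕ) = 4 := rfl
  have hC : (C 2 : Polynomial ℝ) = 2 := map_ofNat C 2
  rw [h4, hC]
  norm_num
  simp only [Matrix.cons_val, zero_mul, sub_zero]
  ring

set_option maxHeartbeats 1000000 in
lemma Amat_pow2 : Amat ^ 2 = !![1,0,1,1,0,1;1,1,0,1,1,0;0,1,1,0,1,1;1,1,0,1,1,0;0,1,1,0,1,1;1,0,1,1,0,1] := by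
  rw [pow_two]
  ext i j
  fin_cases i <;> fin_cases j <;>
    simp [Matrix.mul_apply, Fin.sum_univ_six, Amat, Matrix.vecHead, Matrix.vecTail] <;> norm_num

set_option maxHeartbeats 1000000 in
lemma Amat_pow3 : Amat ^ 3 = !![1,2,1,1,2,1;1,1,2,1,1,2;2,1,1,2,1,1;1,1,2,1,1,2;2,1,1,2,1,1;1,2,1,1,2,1] := by
  rw [pow_succ, Amat_pow2]
  ext i j
  fin_cases i <;> fin_cases j <;>
    simp [Matrix.mul_apply, Fin.sum_univ_six, Matrix.vecHead, Matrix.vecTail, Amat] <;> norm_num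

lemma Amat_rowsum (i : Fin 6) : ∑ j, Amat i j = 2 := by
  fin_cases i <;> simp [Amat, Fin.sum_univ_six, Matrix.vecHead, Matrix.vecTail] <;> norm_num

lemma Amat_pow_rowsum (n : ℕ) (i : Fin 6) : ∑ j, (Amat ^ n) i j = 2 ^ n := by
  induction n generalizing i with
  | zero => simp [Matrix.one_apply]
  | succ n ih =>
    rw [pow_succ]
    simp only [Matrix.mul_apply]
    rw [Finset.sum_comm]
    calc ∑ k, ∑ j, (Amat ^ n) i k * Amat k j
        = ∑ k, (Amat ^ n) i k * ∑ j, Amat k j := by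
          simp [Finset.mul_sum]
      _ = ∑ k, (Amat ^ n) i k * 2 := by simp [Amat_rowsum]
      _ = (∑ k, (Amat ^ n) i k) * 2 := by rw [Finset.sum_mul]
      _ = 2 ^ (n + 1) := by rw [ih]; ring

lemma Amat_pow_total (n : ℕ) : ∑ i, ∑ j, (Amat ^ n) i j = 6 * 2 ^ n := by
  simp only [Amat_pow_rowsum, Finset.sum_const, Finset.card_univ, Fintype.card_fin,
    nsmul_eq_mul]
  push_cast
  ring

theorem Amat_irreducible_spectrum_entropy :
    (∀ i j : Fin 6, ∃ n : ℕ, 0 < n ∧ 0 < (Amat ^ n) i j) ∧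
      Amat.charpoly = (X - C 2) * (X + C 1) ^ 2 * X ^ 3 ∧
      Tendsto (fun n : ℕ => Real.log (∑ i, ∑ j, (Amat ^ n) i j) / n) atTop
        (nhds (Real.log 2)) := by
  refine ⟨?_, Amat_charpoly, ?_⟩
  · intro i j
    refine ⟨3, by norm_num, ?_⟩
    rw [Amat_pow3]
    fin_cases i <;> fin_cases j <;> norm_num
  · have key : ∀ᶠ n : ℕ in atTop,
        Real.log 6 / n + Real.log 2 = Real.log (∑ i, ∑ j, (Amat ^ n) i j) / n := by
      filter_upwards [eventually_ge_atTop 1] with n hn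
      rw [Amat_pow_total]
      have h2 : (0:ℝ) < 2 ^ n := by positivity
      rw [Real.log_mul (by norm_num) (ne_of_gt h2), Real.log_pow]
      have hn' : (n:ℝ) ≠ 0 := by positivity
      field_simp
    refine Tendsto.congr' key ?_
    have h1 : Tendsto (fun n : ℕ => Real.log 6 / n) atTop (nhds 0) :=
      tendsto_const_div_atTop_nhds_zero_nat _
    have := h1.add tendsto_const_nhds (b := Real.log 2)
    simpa using this
end
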